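/- arXiv:1610.00209 — 7 statements merged into one kernel-verified Lean document; each statement's English description precedes it below -/
import Mathlib

section
/- If a homogeneous polynomial p ∈ ℝ[x₁,…,xₙ] is hyperbolic with respect to e ∈ ℝⁿ, then its hyperbolicity cone K(p,e) is an open convex cone. -/
open Polynomial MvPolynomial

/-- A homogeneous polynomial `p` is hyperbolic with respect to `e` if `p(e) > 0` and for
every `x` the univariate polynomial `t ↦ p(te + x)` has only real roots. -/
def Hyperbolic {n : ℕ} (p : MvPolynomial (Fin n) ℝ) (e : Fin n → ℝ) : Prop :=
  0 < MvPolynomial.eval e p ∧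
    ∀ x : Fin n → ℝ, ∀ z : ℂ,
      Polynomial.aeval z
        (MvPolynomial.aeval
          (fun i => Polynomial.C (x i) + Polynomial.C (e i) * Polynomial.X) p) = 0 →
      z.im = 0

/-- The hyperbolicity cone `K(p, e)`: the connected component of
`{x : p(x) ≠ 0}` containing `e`. -/
def hypCone {n : ℕ} (p : MvPolynomial (Fin n) ℝ) (e : Fin n → ℝ) : Set (Fin n → ℝ) :=
  connectedComponentIn {x : Fin n → ℝ | MvPolynomial.eval x p ≠ 0} e

namespace Garding

variable {n : ℕ}

/-- evaluation of the complexified polynomial -/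
noncomputable def P (p : MvPolynomial (Fin n) ℝ) (w : Fin n → ℂ) : ℂ :=
  MvPolynomial.eval w (p.map (algebraMap ℝ ℂ))

/-- the univariate polynomial `s ↦ P p (a + s • b)` -/
noncomputable def Q (p : MvPolynomial (Fin n) ℝ) (a b : Fin n → ℂ) : Polynomial ℂ :=
  MvPolynomial.eval₂ Polynomial.C
    (fun i => Polynomial.C (a i) + Polynomial.C (b i) * Polynomial.X)
    (p.map (algebraMap ℝ ℂ))

def cR (v : Fin n → ℝ) : Fin n → ℂ := fun i => (v i : ℂ)

lemma contP (p : MvPolynomial (Fin n) ℝ) : Continuous (P p) :=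
  MvPolynomial.continuous_eval _

lemma evalQ (p : MvPolynomial (Fin n) ℝ) (a b : Fin n → ℂ) (s : ℂ) :
    (Q p a b).eval s = P p (a + s • b) := by
  unfold Q P
  have h := MvPolynomial.eval₂_comp_left (Polynomial.evalRingHom s)
    (Polynomial.C : ℂ →+* Polynomial ℂ)
    (fun i => Polynomial.C (a i) + Polynomial.C (b i) * Polynomial.X)
    (p.map (algebraMap ℝ ℂ))
  simp only [Polynomial.coe_evalRingHom] at h
  rw [h]
  have h2 : (Polynomial.evalRingHom s).comp (Polynomial.C : ℂ →+* Polynomial ℂ)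
      = RingHom.id ℂ := by ext c; simp
  rw [h2]
  rw [show (Polynomial.eval s ∘ fun i =>
        (Polynomial.C (a i) + Polynomial.C (b i) * Polynomial.X)) = (a + s • b : Fin n → ℂ) from
    funext fun i => by
      simp only [Function.comp_apply, Polynomial.eval_add, Polynomial.eval_mul,
        Polynomial.eval_C, Polynomial.eval_X, Pi.add_apply, Pi.smul_apply, smul_eq_mul]
      ring]
  exact MvPolynomial.eval₂_id _
lemma realP (p : MvPolynomial (Fin n) ℝ) (v : Fin n → ℝ) :
    P p (cR v) = ((MvPolynomial.eval v p : ℝ) : ℂ) := by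
  unfold P cR
  rw [MvPolynomial.eval_map]
  rw [show ((MvPolynomial.eval v p : ℝ) : ℂ) = Complex.ofRealHom (MvPolynomial.eval v p) from rfl]
  rw [show MvPolynomial.eval v p = MvPolynomial.eval₂ (RingHom.id ℝ) v p from
    (MvPolynomial.eval₂_id p).symm]
  rw [MvPolynomial.eval₂_comp_left Complex.ofRealHom (RingHom.id ℝ) v p]
  rfl

/-- monomials of (the complexification of) a homogeneous polynomial have degree `d` -/
lemma memsup {d : ℕ} {p : MvPolynomial (Fin n) ℝ} (hhom : p.IsHomogeneous d)
    {m : Fin n →₀ ℕ} (hm : m ∈ (p.map (algebraMap ℝ ℂ)).support) :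
    ∑ i ∈ m.support, m i = d := by
  rw [MvPolynomial.mem_support_iff, MvPolynomial.coeff_map] at hm
  have h1 : MvPolynomial.coeff m p ≠ 0 := by
    intro h0
    rw [h0] at hm
    simp at hm
  by_contra hne
  exact h1 (hhom.coeff_eq_zero (by rwa [Finsupp.degree]))

lemma hsmulC {d : ℕ} {p : MvPolynomial (Fin n) ℝ} (hhom : p.IsHomogeneous d)
    (c : ℂ) (w : Fin n → ℂ) : P p (c • w) = c ^ d * P p w := by
  unfold P
  rw [MvPolynomial.eval_eq, MvPolynomial.eval_eq, Finset.mul_sum]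
  apply Finset.sum_congr rfl
  intro m hm
  have hd := memsup hhom hm
  have : ∏ i ∈ m.support, (c • w) i ^ m i = c ^ d * ∏ i ∈ m.support, w i ^ m i := by
    rw [← hd, ← Finset.prod_pow_eq_pow_sum, ← Finset.prod_mul_distrib]
    apply Finset.prod_congr rfl
    intro i _
    simp [mul_pow]
  rw [this]; ring

lemma hsmulR {d : ℕ} {p : MvPolynomial (Fin n) ℝ} (hhom : p.IsHomogeneous d)
    (c : ℝ) (w : Fin n → ℝ) :
    MvPolynomial.eval (c • w) p = c ^ d * MvPolynomial.eval w p := by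
  have h1 : Finset.sum p.support (fun m => MvPolynomial.coeff m p *
      ∏ i ∈ m.support, (c • w) i ^ m i) = _ := rfl
  rw [MvPolynomial.eval_eq, MvPolynomial.eval_eq, Finset.mul_sum]
  apply Finset.sum_congr rfl
  intro m hm
  have hd : ∑ i ∈ m.support, m i = d := by
    rw [MvPolynomial.mem_support_iff] at hm
    by_contra hne
    exact hm (hhom.coeff_eq_zero (by rwa [Finsupp.degree]))
  have : ∏ i ∈ m.support, (c • w) i ^ m i = c ^ d * ∏ i ∈ m.support, w i ^ m i := by
    rw [← hd, ← Finset.prod_pow_eq_pow_sum, ← Finset.prod_mul_distrib]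
    apply Finset.prod_congr rfl
    intro i _
    simp [mul_pow]
  rw [this]; ring

lemma coeff_prod_top {ι : Type*} (s : Finset ι) (g : ι → Polynomial ℂ) (k : ι → ℕ)
    (h : ∀ i ∈ s, (g i).natDegree ≤ k i) :
    (∏ i ∈ s, g i).coeff (∑ i ∈ s, k i) = ∏ i ∈ s, (g i).coeff (k i) := by
  classical
  induction s using Finset.induction with
  | empty => simp
  | @insert a t ha ih =>
    rw [Finset.prod_insert ha, Finset.sum_insert ha, Finset.prod_insert ha]
    rw [Polynomial.coeff_mul_add_eq_of_natDegree_le (h a (Finset.mem_insert_self a t))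
      (le_trans (Polynomial.natDegree_prod_le t g)
        (Finset.sum_le_sum (fun i hi => h i (Finset.mem_insert_of_mem hi))))]
    rw [ih (fun i hi => h i (Finset.mem_insert_of_mem hi))]

lemma lin_deg (a b : ℂ) : (Polynomial.C a + Polynomial.C b * Polynomial.X).natDegree ≤ 1 := by
  compute_degree

lemma lin_coeff (a b : ℂ) : (Polynomial.C a + Polynomial.C b * Polynomial.X).coeff 1 = b := by
  simp

lemma Qdeg {d : ℕ} {p : MvPolynomial (Fin n) ℝ} (hhom : p.IsHomogeneous d)
    (a b : Fin n → ℂ) : (Q p a b).natDegree ≤ d := by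
  unfold Q
  rw [MvPolynomial.eval₂_eq]
  apply Polynomial.natDegree_sum_le_of_forall_le
  intro m hm
  refine le_trans (Polynomial.natDegree_mul_le) ?_
  rw [Polynomial.natDegree_C]
  simp only [zero_add]
  refine le_trans (Polynomial.natDegree_prod_le _ _) ?_
  rw [← memsup hhom hm]
  apply Finset.sum_le_sum
  intro i _
  refine le_trans (Polynomial.natDegree_pow_le) ?_
  calc m i * (Polynomial.C (a i) + Polynomial.C (b i) * Polynomial.X).natDegree
      ≤ m i * 1 := Nat.mul_le_mul_left _ (lin_deg _ _)
    _ = m i := Nat.mul_one _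

lemma Qcoeff {d : ℕ} {p : MvPolynomial (Fin n) ℝ} (hhom : p.IsHomogeneous d)
    (a b : Fin n → ℂ) : (Q p a b).coeff d = P p b := by
  unfold Q P
  rw [MvPolynomial.eval₂_eq, MvPolynomial.eval_eq, Polynomial.finset_sum_coeff]
  apply Finset.sum_congr rfl
  intro m hm
  rw [Polynomial.coeff_C_mul]
  congr 1
  rw [← memsup hhom hm]
  rw [coeff_prod_top _ _ _ (fun i _ => le_trans Polynomial.natDegree_pow_le
    (by calc m i * (Polynomial.C (a i) + Polynomial.C (b i) * Polynomial.X).natDegree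
          ≤ m i * 1 := Nat.mul_le_mul_left _ (lin_deg _ _)
        _ = m i := Nat.mul_one _))]
  apply Finset.prod_congr rfl
  intro i _
  have := Polynomial.coeff_pow_of_natDegree_le (p := Polynomial.C (a i) + Polynomial.C (b i) * Polynomial.X) (n := 1) (m := m i) (lin_deg _ _)
  rw [Nat.mul_one] at this
  rw [this, lin_coeff]

section Roots

variable {d : ℕ} {p : MvPolynomial (Fin n) ℝ} (hhom : p.IsHomogeneous d)
  {a b : Fin n → ℂ} (hb : P p b ≠ 0)

include hhom hb

lemma Qne : Q p a b ≠ 0 := fun h0 => hb (by rw [← Qcoeff hhom a b, h0, Polynomial.coeff_zero])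

lemma QnatDegree : (Q p a b).natDegree = d :=
  le_antisymm (Qdeg hhom a b) (Polynomial.le_natDegree_of_ne_zero (by
    rw [Qcoeff hhom a b]; exact hb))

lemma QleadingCoeff : (Q p a b).leadingCoeff = P p b := by
  rw [Polynomial.leadingCoeff, QnatDegree hhom hb, Qcoeff hhom a b]

lemma Qcard : Multiset.card (Q p a b).roots = d := by
  rw [← QnatDegree hhom hb]
  exact (Polynomial.splits_iff_card_roots).mp (IsAlgClosed.splits _)

lemma Qmemroots {r : ℂ} : r ∈ (Q p a b).roots ↔ P p (a + r • b) = 0 := by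
  rw [Polynomial.mem_roots (Qne hhom hb), Polynomial.IsRoot, evalQ]

lemma Qevalnorm (s : ℂ) :
    ‖(Q p a b).eval s‖ = ‖P p b‖ * (((Q p a b).roots.map (fun r => ‖s - r‖)).prod) := by
  conv_lhs => rw [← Polynomial.C_leadingCoeff_mul_prod_multiset_X_sub_C
    ((Qcard hhom hb).trans (QnatDegree hhom hb).symm)]
  rw [Polynomial.eval_mul, Polynomial.eval_C, norm_mul, QleadingCoeff hhom hb]
  congr 1
  rw [Polynomial.eval_multiset_prod, Multiset.map_map, ← normHom_apply (α := ℂ),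
    map_multiset_prod (normHom : ℂ →*₀ ℝ), Multiset.map_map]
  congr 1
  apply Multiset.map_congr rfl
  intro r _
  simp

end Roots

lemma ms_prod_ge {m : Multiset ℝ} {c : ℝ} (hc0 : 0 ≤ c) (h : ∀ x ∈ m, c ≤ x) :
    c ^ Multiset.card m ≤ m.prod := by
  induction m using Multiset.induction with
  | empty => simp
  | cons x m ih =>
    rw [Multiset.card_cons, Multiset.prod_cons, pow_succ, mul_comm (c ^ Multiset.card m) c]
    exact mul_le_mul (h x (Multiset.mem_cons_self x m))
      (ih (fun y hy => h y (Multiset.mem_cons_of_mem hy)))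
      (pow_nonneg hc0 _) (le_trans hc0 (h x (Multiset.mem_cons_self x m)))

lemma lowerbd {d : ℕ} {p : MvPolynomial (Fin n) ℝ} (hhom : p.IsHomogeneous d)
    {a b : Fin n → ℂ} (hb : P p b ≠ 0) (s : ℂ) {ε : ℝ} (hε : 0 ≤ ε)
    (h : ∀ r ∈ (Q p a b).roots, ε ≤ ‖s - r‖) :
    ‖P p b‖ * ε ^ d ≤ ‖(Q p a b).eval s‖ := by
  rw [Qevalnorm hhom hb s]
  apply mul_le_mul_of_nonneg_left _ (norm_nonneg _)
  have hcard : d = Multiset.card ((Q p a b).roots.map fun r => ‖s - r‖) := by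
    rw [Multiset.card_map, Qcard hhom hb]
  rw [hcard]
  apply ms_prod_ge hε
  intro x hx
  obtain ⟨r, hr, rfl⟩ := Multiset.mem_map.mp hx
  exact h r hr

lemma hypeq (p : MvPolynomial (Fin n) ℝ) (v w : Fin n → ℝ) (s : ℂ) :
    Polynomial.aeval s (MvPolynomial.aeval
      (fun i => Polynomial.C (v i) + Polynomial.C (w i) * Polynomial.X) p)
      = (Q p (cR v) (cR w)).eval s := by
  rw [evalQ]
  unfold P cR
  induction p using MvPolynomial.induction_on with
  | C r => simp [Complex.coe_algebraMap]
  | add p q hp hq => simp only [map_add, hp, hq, Polynomial.eval_add]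
  | mul_X p i hp =>
    simp only [map_mul, hp, MvPolynomial.aeval_X, MvPolynomial.map_X, MvPolynomial.eval_X]
    congr 1
    simp only [map_add, map_mul, Polynomial.aeval_C, Polynomial.aeval_X, Pi.add_apply,
      Pi.smul_apply, smul_eq_mul, Complex.coe_algebraMap]
    ring

lemma conjP (p : MvPolynomial (Fin n) ℝ) (w : Fin n → ℂ) :
    P p (fun i => starRingEnd ℂ (w i)) = starRingEnd ℂ (P p w) := by
  unfold P
  rw [MvPolynomial.eval_map, MvPolynomial.eval_map]
  rw [MvPolynomial.eval₂_comp_left (starRingEnd ℂ) (algebraMap ℝ ℂ) w p]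
  congr 1
  ext r
  simp

lemma cR_add (u v : Fin n → ℝ) : cR (u + v) = cR u + cR v := by
  funext i; simp [cR]

lemma cR_smul (c : ℝ) (v : Fin n → ℝ) : cR (c • v) = (c : ℂ) • cR v := by
  funext i; simp [cR]

lemma cont_cR : Continuous (cR (n := n)) :=
  continuous_pi fun i => Complex.continuous_ofReal.comp (continuous_apply i)

/-- the connectedness bookkeeping lemma -/
lemma no_bad {SS Bad : Set ℝ}
    (hup : ∀ ⦃a b : ℝ⦄, a ∈ SS → a ≤ b → b ∈ SS)
    (hBadS : Bad ⊆ SS)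
    (hBadcl : ∀ (u : ℕ → ℝ) (l : ℝ), (∀ k, u k ∈ Bad) →
      Filter.Tendsto u Filter.atTop (nhds l) → l ∈ SS → l ∈ Bad)
    (hGoodcl : ∀ (u : ℕ → ℝ) (l : ℝ), (∀ k, u k ∈ SS \ Bad) →
      Filter.Tendsto u Filter.atTop (nhds l) → l ∈ SS → l ∉ Bad)
    (θ₀ : ℝ) (htail : ∀ θ : ℝ, θ₀ ≤ θ → θ ∈ SS → θ ∉ Bad) :
    Bad = ∅ := by
  by_contra hne
  obtain ⟨b, hb⟩ := Set.nonempty_iff_ne_empty.mpr hne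
  have hbdd : BddAbove Bad := by
    refine ⟨θ₀, fun β hβ => ?_⟩
    by_contra hcon
    exact htail β (le_of_not_ge hcon) (hBadS hβ) hβ
  set σ := sSup Bad with hσ
  have hbσ : b ≤ σ := le_csSup hbdd hb
  have hσS : σ ∈ SS := hup (hBadS hb) hbσ
  have hσBad : σ ∈ Bad := by
    have hmem : σ ∈ closure Bad := (Real.isLUB_sSup ⟨b, hb⟩ hbdd).mem_closure ⟨b, hb⟩
    obtain ⟨u, hu, hul⟩ := mem_closure_iff_seq_limit.mp hmem
    exact hBadcl u σ hu hul hσS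
  have hσGood : σ ∉ Bad := by
    apply hGoodcl (fun k => σ + 1 / (k + 1)) σ
    · intro k
      constructor
      · exact hup hσS (le_add_of_nonneg_right (by positivity))
      · intro hc
        have := le_csSup hbdd hc
        have h2 : (0:ℝ) < 1 / ((k:ℝ) + 1) := by positivity
        linarith
    · have : Filter.Tendsto (fun k : ℕ => 1 / ((k:ℝ) + 1)) Filter.atTop (nhds 0) :=
        tendsto_one_div_add_atTop_nhds_zero_nat
      simpa using (tendsto_const_nhds (x := σ)).add this
    · exact hσS
  exact hσGood hσBad

section Main

variable {d : ℕ} {p : MvPolynomial (Fin n) ℝ} {e : Fin n → ℝ}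

/-- the candidate cone -/
def S (p : MvPolynomial (Fin n) ℝ) (e : Fin n → ℝ) : Set (Fin n → ℝ) :=
  {v | ∀ t : ℝ, 0 ≤ t → MvPolynomial.eval (v + t • e) p ≠ 0}

variable (hhom : p.IsHomogeneous d) (hyp : Hyperbolic p e)

lemma pe_pos (hyp : Hyperbolic p e) : 0 < MvPolynomial.eval e p := hyp.1

lemma PeC (hyp : Hyperbolic p e) : P p (cR e) ≠ 0 := by
  rw [realP]
  exact_mod_cast ne_of_gt hyp.1

lemma rootsRealE (hyp : Hyperbolic p e) (v : Fin n → ℝ) {s : ℂ}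
    (hs : P p (cR v + s • cR e) = 0) : s.im = 0 := by
  apply hyp.2 v s
  rw [hypeq, evalQ]
  exact hs

lemma eS (hhom : p.IsHomogeneous d) (hyp : Hyperbolic p e) : e ∈ S p e := by
  intro t ht
  have h1 : e + t • e = (1 + t) • e := by
    funext i; simp [mul_comm]; ring
  rw [h1, hsmulR hhom]
  have h2 : (0:ℝ) < 1 + t := by linarith
  exact mul_ne_zero (pow_ne_zero _ (ne_of_gt h2)) (ne_of_gt hyp.1)

lemma Sshift {v : Fin n → ℝ} (hv : v ∈ S p e) {τ : ℝ} (hτ : 0 ≤ τ) :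
    v + τ • e ∈ S p e := by
  intro t ht
  have h1 : v + τ • e + t • e = v + (τ + t) • e := by
    funext i; simp; ring
  rw [h1]
  exact hv (τ + t) (by linarith)

lemma Sne {v : Fin n → ℝ} (hv : v ∈ S p e) : MvPolynomial.eval v p ≠ 0 := by
  have := hv 0 le_rfl
  simpa using this

lemma Sscale (hhom : p.IsHomogeneous d) {v : Fin n → ℝ} (hv : v ∈ S p e) {c : ℝ}
    (hc : 0 < c) : c • v ∈ S p e := by
  intro t ht
  have h1 : c • v + t • e = c • (v + (t / c) • e) := by
    funext i; simp; field_simp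
  rw [h1, hsmulR hhom]
  exact mul_ne_zero (pow_ne_zero _ (ne_of_gt hc)) (hv (t / c) (by positivity))

/-- for `v ∈ S`, all roots of the `e`-direction polynomial are real and negative -/
lemma SrootsNeg (hyp : Hyperbolic p e) {v : Fin n → ℝ} (hv : v ∈ S p e) {s : ℂ}
    (hs : P p (cR v + s • cR e) = 0) : s.im = 0 ∧ s.re < 0 := by
  have him : s.im = 0 := rootsRealE hyp v hs
  refine ⟨him, ?_⟩
  by_contra hre
  push_neg at hre
  have hs' : s = ((s.re : ℝ) : ℂ) := Complex.ext rfl (by simp [him])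
  rw [hs'] at hs
  rw [← cR_smul, ← cR_add, realP] at hs
  exact hv s.re hre (by exact_mod_cast hs)

end Main

section ML

variable {d : ℕ} {p : MvPolynomial (Fin n) ℝ}

lemma rootbdd (hhom : p.IsHomogeneous d) {x : Fin n → ℂ} (hx : P p x ≠ 0)
    {v : ℕ → Fin n → ℂ} {vl : Fin n → ℂ}
    (hv : Filter.Tendsto v Filter.atTop (nhds vl))
    {s : ℕ → ℂ} (hs : ∀ k, P p (v k + s k • x) = 0) :
    ∃ M : ℝ, ∀ k, ‖s k‖ ≤ M := by
  have hopen : IsOpen {w : Fin n → ℂ | P p w ≠ 0} := by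
    have : {w : Fin n → ℂ | P p w ≠ 0} = (P p) ⁻¹' ({0}ᶜ) := rfl
    rw [this]
    exact (isClosed_singleton.isOpen_compl).preimage (contP p)
  obtain ⟨ε, hε, hball⟩ := Metric.isOpen_iff.mp hopen x hx
  obtain ⟨B, hB⟩ := isBounded_iff_forall_norm_le.mp
    (Metric.isBounded_range_of_tendsto v hv)
  have hB' : ∀ k, ‖v k‖ ≤ B := fun k => hB _ (Set.mem_range_self k)
  refine ⟨max 1 (B / ε), fun k => ?_⟩
  by_contra hcon
  push_neg at hcon
  have h1 : (1:ℝ) < ‖s k‖ := lt_of_le_of_lt (le_max_left _ _) hcon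
  have h2 : B / ε < ‖s k‖ := lt_of_le_of_lt (le_max_right _ _) hcon
  have hs0 : s k ≠ 0 := by
    intro h0; rw [h0] at h1; simp at h1; linarith
  have key : P p ((s k)⁻¹ • v k + x) = 0 := by
    have heq : (s k) • ((s k)⁻¹ • v k + x) = v k + s k • x := by
      rw [smul_add, smul_inv_smul₀ hs0]
    have := hsmulC hhom (s k) ((s k)⁻¹ • v k + x)
    rw [heq, hs k] at this
    exact (mul_eq_zero.mp this.symm).resolve_left (pow_ne_zero _ hs0)
  have hnot : ((s k)⁻¹ • v k + x) ∉ Metric.ball x ε := fun hmem => (hball hmem) key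
  have hdist : dist ((s k)⁻¹ • v k + x) x = ‖(s k)⁻¹ • v k‖ := by
    rw [dist_eq_norm]; congr 1; abel
  have hge : ε ≤ ‖(s k)⁻¹ • v k‖ := by
    by_contra hlt
    push_neg at hlt
    exact hnot (by rwa [Metric.mem_ball, hdist])
  rw [norm_smul, norm_inv] at hge
  have hεk : ε * ‖s k‖ ≤ ‖v k‖ := by
    rw [inv_mul_eq_div, le_div_iff₀ (by linarith)] at hge
    linarith [hge]
  have : ‖s k‖ ≤ B / ε := by
    rw [le_div_iff₀ hε]
    calc ‖s k‖ * ε = ε * ‖s k‖ := mul_comm _ _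
      _ ≤ ‖v k‖ := hεk
      _ ≤ B := hB' k
  linarith

lemma ml1 (hhom : p.IsHomogeneous d) {x : Fin n → ℂ} (hx : P p x ≠ 0)
    {v : ℕ → Fin n → ℂ} {vl : Fin n → ℂ}
    (hv : Filter.Tendsto v Filter.atTop (nhds vl))
    {s : ℕ → ℂ} (hs : ∀ k, P p (v k + s k • x) = 0) :
    ∃ (sl : ℂ) (φ : ℕ → ℕ), StrictMono φ ∧
      Filter.Tendsto (s ∘ φ) Filter.atTop (nhds sl) ∧ P p (vl + sl • x) = 0 := by
  obtain ⟨M, hM⟩ := rootbdd hhom hx hv hs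
  obtain ⟨sl, _, φ, hφ, hsφ⟩ := tendsto_subseq_of_bounded
    (Metric.isBounded_closedBall (x := (0:ℂ)) (r := M))
    (fun k => by simpa [Metric.mem_closedBall, dist_eq_norm] using hM k)
  refine ⟨sl, φ, hφ, hsφ, ?_⟩
  have hlim : Filter.Tendsto (fun k => v (φ k) + (s (φ k)) • x)
      Filter.atTop (nhds (vl + sl • x)) := by
    exact ((hv.comp hφ.tendsto_atTop).add (hsφ.smul_const x))
  have h3 := ((contP p).continuousAt (x := vl + sl • x)).tendsto.comp hlim
  rw [show (P p ∘ fun k => v (φ k) + s (φ k) • x) = fun _ : ℕ => (0:ℂ) from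
    funext fun k => by rw [Function.comp_apply]; exact hs (φ k)] at h3
  exact tendsto_nhds_unique h3 tendsto_const_nhds

lemma ml2 (hhom : p.IsHomogeneous d) {x : Fin n → ℂ} (hx : P p x ≠ 0)
    {v : ℕ → Fin n → ℂ} {vl : Fin n → ℂ}
    (hv : Filter.Tendsto v Filter.atTop (nhds vl))
    {s₀ : ℂ} (h0 : P p (vl + s₀ • x) = 0) {ε : ℝ} (hε : 0 < ε) :
    ∃ (k : ℕ) (r : ℂ), P p (v k + r • x) = 0 ∧ ‖s₀ - r‖ < ε := by
  by_contra hcon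
  push_neg at hcon
  have hfar : ∀ k, ∀ r ∈ (Q p (v k) x).roots, ε ≤ ‖s₀ - r‖ := by
    intro k r hr
    exact hcon k r ((Qmemroots hhom hx).mp hr)
  have hlb : ∀ k, ‖P p x‖ * ε ^ d ≤ ‖P p (v k + s₀ • x)‖ := by
    intro k
    have := lowerbd hhom hx s₀ (le_of_lt hε) (hfar k)
    rwa [evalQ] at this
  have hlim : Filter.Tendsto (fun k => P p (v k + s₀ • x)) Filter.atTop (nhds 0) := by
    have h1 : Filter.Tendsto (fun k => v k + s₀ • x) Filter.atTop (nhds (vl + s₀ • x)) :=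
      hv.add tendsto_const_nhds
    have := ((contP p).continuousAt (x := vl + s₀ • x)).tendsto.comp h1
    rwa [h0] at this
  have hnorm : Filter.Tendsto (fun k => ‖P p (v k + s₀ • x)‖) Filter.atTop (nhds 0) := by
    simpa using hlim.norm
  have hle : ‖P p x‖ * ε ^ d ≤ 0 := ge_of_tendsto hnorm
    (Filter.Eventually.of_forall hlb)
  have hpos : 0 < ‖P p x‖ := norm_pos_iff.mpr hx
  have : 0 < ‖P p x‖ * ε ^ d := by positivity
  linarith

end ML

section ClaimA

variable {d : ℕ} {p : MvPolynomial (Fin n) ℝ} {e : Fin n → ℝ}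

lemma PxC {x : Fin n → ℝ} (hx : MvPolynomial.eval x p ≠ 0) : P p (cR x) ≠ 0 := by
  rw [realP]; exact_mod_cast hx

lemma noreal (hyp : Hyperbolic p e) (y x : Fin n → ℝ) {ν : ℝ} (hν : ν ≠ 0) (t : ℝ) :
    P p (cR y + ((ν:ℂ) * Complex.I) • cR e + (t:ℂ) • cR x) ≠ 0 := by
  intro h0
  have heq : cR y + ((ν:ℂ) * Complex.I) • cR e + (t:ℂ) • cR x
      = cR (y + t • x) + ((ν:ℂ) * Complex.I) • cR e := by
    funext i; simp [cR]; ring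
  rw [heq] at h0
  have := rootsRealE hyp (y + t • x) h0
  simp at this
  exact hν this

lemma keyInfty (hhom : p.IsHomogeneous d) (hyp : Hyperbolic p e)
    {x : Fin n → ℝ} (hx : x ∈ S p e) :
    ∀ u : ℂ, 0 ≤ u.im → P p (Complex.I • cR e + u • cR x) ≠ 0 := by
  intro u him h0
  by_cases hu : u = 0
  · rw [hu, zero_smul, add_zero] at h0
    rw [hsmulC hhom Complex.I (cR e)] at h0
    exact (mul_ne_zero (pow_ne_zero _ Complex.I_ne_zero) (PeC hyp)) h0
  · have heq : Complex.I • cR e + u • cR x = u • (cR x + (Complex.I / u) • cR e) := by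
      rw [smul_add, smul_smul, mul_div_cancel₀ _ hu, add_comm]
    rw [heq, hsmulC hhom] at h0
    have h1 : P p (cR x + (Complex.I / u) • cR e) = 0 :=
      (mul_eq_zero.mp h0).resolve_left (pow_ne_zero _ hu)
    have h2 := SrootsNeg hyp hx h1
    set w := Complex.I / u with hwdef
    have hw : w ≠ 0 := div_ne_zero Complex.I_ne_zero hu
    have hu_eq : u = Complex.I / w := by
      rw [hwdef]
      field_simp
    have hwre : w = ((w.re : ℝ) : ℂ) := Complex.ext rfl (by simp [h2.1])
    have hmul : u * ((w.re : ℝ) : ℂ) = Complex.I := by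
      rw [hu_eq, ← hwre]
      exact div_mul_cancel₀ _ hw
    have him1 : u.im * w.re = 1 := by
      have := congrArg Complex.im hmul
      simpa [Complex.mul_im] using this
    nlinarith [h2.2]

lemma claimA (hhom : p.IsHomogeneous d) (hyp : Hyperbolic p e)
    {x : Fin n → ℝ} (hx : x ∈ S p e) (y : Fin n → ℝ) :
    ∀ ν : ℝ, 0 < ν → ∀ s : ℂ,
      P p (cR y + ((ν:ℂ) * Complex.I) • cR e + s • cR x) = 0 → s.im < 0 := by
  have hx0 : P p (cR x) ≠ 0 := PxC (Sne hx)
  set Bad : Set ℝ := {ν | 0 < ν ∧ ∃ s : ℂ,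
    P p (cR y + ((ν:ℂ) * Complex.I) • cR e + s • cR x) = 0 ∧ 0 ≤ s.im} with hBad
  have hvcont : ∀ (u : ℕ → ℝ) (l : ℝ), Filter.Tendsto u Filter.atTop (nhds l) →
      Filter.Tendsto (fun k => cR y + (((u k : ℝ):ℂ) * Complex.I) • cR e)
        Filter.atTop (nhds (cR y + (((l:ℝ):ℂ) * Complex.I) • cR e)) := by
    intro u l hu
    apply Filter.Tendsto.const_add
    apply Filter.Tendsto.smul_const
    exact ((Complex.continuous_ofReal.tendsto l).comp hu).mul_const Complex.I
  have hBadcl : ∀ (u : ℕ → ℝ) (l : ℝ), (∀ k, u k ∈ Bad) →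
      Filter.Tendsto u Filter.atTop (nhds l) → l ∈ Set.Ioi (0:ℝ) → l ∈ Bad := by
    intro u l hu hul hl
    choose s hs him using fun k => (hu k).2
    obtain ⟨sl, φ, hφ, hsφ, hroot⟩ := ml1 hhom hx0 (hvcont u l hul) hs
    refine ⟨hl, sl, hroot, ?_⟩
    have hten : Filter.Tendsto (fun k => (s (φ k)).im) Filter.atTop (nhds sl.im) :=
      (Complex.continuous_im.tendsto sl).comp hsφ
    exact ge_of_tendsto hten (Filter.Eventually.of_forall (fun k => him (φ k)))
  have hGoodcl : ∀ (u : ℕ → ℝ) (l : ℝ), (∀ k, u k ∈ Set.Ioi (0:ℝ) \ Bad) →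
      Filter.Tendsto u Filter.atTop (nhds l) → l ∈ Set.Ioi (0:ℝ) → l ∉ Bad := by
    intro u l hu hul hl hbad
    obtain ⟨-, s₀, hs₀, him₀⟩ := hbad
    have hsim : 0 < s₀.im := by
      rcases lt_or_eq_of_le him₀ with h | h
      · exact h
      · exfalso
        have hs0' : s₀ = ((s₀.re : ℝ) : ℂ) := Complex.ext rfl (by simp [← h])
        rw [hs0'] at hs₀
        exact noreal hyp y x (ne_of_gt hl) s₀.re hs₀
    obtain ⟨k, r, hr, hrc⟩ := ml2 hhom hx0 (hvcont u l hul) hs₀ hsim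
    have hpos : 0 < r.im := by
      have h1 : (s₀ - r).im ≤ ‖s₀ - r‖ :=
        le_trans (le_abs_self _) (by exact Complex.abs_im_le_norm _)
      rw [Complex.sub_im] at h1
      linarith
    exact ((hu k).2) ⟨(hu k).1, r, hr, le_of_lt hpos⟩
  have htail : ∃ θ₀ : ℝ, ∀ ν : ℝ, θ₀ ≤ ν → ν ∈ Set.Ioi (0:ℝ) → ν ∉ Bad := by
    by_contra hcon
    push_neg at hcon
    choose ν hν1 hν2 hν3 using fun k : ℕ => hcon ((k:ℝ)+1)
    choose s hs him using fun k => (hν3 k).2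
    have hνpos : ∀ k, (0:ℝ) < ν k := fun k => hν2 k
    set u : ℕ → ℂ := fun k => ((ν k)⁻¹ : ℝ) • s k with hudef
    set w : ℕ → (Fin n → ℂ) := fun k => (((ν k : ℝ)):ℂ)⁻¹ • cR y + Complex.I • cR e
      with hwdef
    have hkey : ∀ k, P p (w k + u k • cR x) = 0 := by
      intro k
      have hc0 : ((ν k : ℝ) : ℂ) ≠ 0 := by
        exact_mod_cast ne_of_gt (hνpos k)
      have heq : ((ν k : ℝ):ℂ) • (w k + u k • cR x)
          = cR y + (((ν k : ℝ) : ℂ) * Complex.I) • cR e + s k • cR x := by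
        funext i
        simp only [hwdef, hudef, cR, Pi.add_apply, Pi.smul_apply, smul_eq_mul,
          Complex.real_smul, Complex.ofReal_inv]
        field_simp
      have h2 := hsmulC hhom ((ν k : ℝ):ℂ) (w k + u k • cR x)
      rw [heq, hs k] at h2
      exact (mul_eq_zero.mp h2.symm).resolve_left (pow_ne_zero _ hc0)
    have hν_top : Filter.Tendsto ν Filter.atTop Filter.atTop :=
      Filter.tendsto_atTop_mono (fun k => hν1 k)
        (Filter.tendsto_atTop_add_const_right _ 1 tendsto_natCast_atTop_atTop)
    have hinv : Filter.Tendsto (fun k => ((ν k)⁻¹ : ℝ)) Filter.atTop (nhds 0) :=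
      tendsto_inv_atTop_zero.comp hν_top
    have hinvC : Filter.Tendsto (fun k => ((((ν k) : ℝ)):ℂ)⁻¹) Filter.atTop (nhds 0) := by
      have := (Complex.continuous_ofReal.tendsto 0).comp hinv
      simpa [Function.comp_def, Complex.ofReal_inv] using this
    have hwlim : Filter.Tendsto w Filter.atTop (nhds (Complex.I • cR e)) := by
      have h1 := (hinvC.smul_const (cR y)).add_const (Complex.I • cR e)
      rw [hwdef]
      simpa using h1
    have him' : ∀ k, 0 ≤ (u k).im := by
      intro k
      rw [hudef]
      simp only [Complex.smul_im]
      exact mul_nonneg (inv_nonneg.mpr (le_of_lt (hνpos k))) (him k)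
    obtain ⟨ul, φ, hφ, hulφ, hroot⟩ := ml1 hhom hx0 hwlim hkey
    have hulim : 0 ≤ ul.im := ge_of_tendsto ((Complex.continuous_im.tendsto ul).comp hulφ)
      (Filter.Eventually.of_forall fun k => him' (φ k))
    exact keyInfty hhom hyp hx ul hulim hroot
  obtain ⟨θ₀, htail⟩ := htail
  have hempty : Bad = ∅ := no_bad (fun a b ha hab => lt_of_lt_of_le ha hab)
    (fun β hβ => hβ.1) hBadcl hGoodcl θ₀ htail
  intro ν hν s hs
  by_contra hcon2
  push_neg at hcon2
  have hmem : ν ∈ Bad := ⟨hν, s, hs, hcon2⟩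
  rw [hempty] at hmem
  exact hmem

lemma rootsRealX (hhom : p.IsHomogeneous d) (hyp : Hyperbolic p e)
    {x : Fin n → ℝ} (hx : x ∈ S p e) (v : Fin n → ℝ) {s : ℂ}
    (hs : P p (cR v + s • cR x) = 0) : s.im = 0 := by
  have hx0 : P p (cR x) ≠ 0 := PxC (Sne hx)
  by_contra hne
  have main : ∀ s : ℂ, 0 < s.im → P p (cR v + s • cR x) ≠ 0 := by
    intro s₀ him hs₀
    have hvlim : Filter.Tendsto
        (fun k : ℕ => cR v + (((1/((k:ℝ)+1) : ℝ):ℂ) * Complex.I) • cR e)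
        Filter.atTop (nhds (cR v)) := by
      have h1 : Filter.Tendsto (fun k : ℕ => (1/((k:ℝ)+1))) Filter.atTop (nhds 0) :=
        tendsto_one_div_add_atTop_nhds_zero_nat
      have h2 := ((Complex.continuous_ofReal.tendsto 0).comp h1).mul_const Complex.I
      have h3 := (h2.smul_const (cR e)).const_add (cR v)
      simpa [Function.comp_def] using h3
    obtain ⟨k, r, hr, hrc⟩ := ml2 hhom hx0 hvlim hs₀ him
    have himr : 0 < r.im := by
      have h1 : (s₀ - r).im ≤ ‖s₀ - r‖ :=
        le_trans (le_abs_self _) (by exact Complex.abs_im_le_norm _)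
      rw [Complex.sub_im] at h1
      linarith
    have := claimA hhom hyp hx v (1/((k:ℝ)+1)) (by positivity) r hr
    linarith
  rcases lt_or_gt_of_ne hne with hlt | hgt
  · apply main (starRingEnd ℂ s) (by simpa using neg_pos.mpr hlt)
    have hc := conjP p (cR v + s • cR x)
    have harg : (fun i => starRingEnd ℂ ((cR v + s • cR x) i))
        = cR v + (starRingEnd ℂ s) • cR x := by
      funext i; simp [cR]
    rw [harg] at hc
    rw [hc, hs]
    simp
  · exact main s hgt hs

lemma eRootsNeg (hhom : p.IsHomogeneous d) (hyp : Hyperbolic p e)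
    {x : Fin n → ℝ} (hx : x ∈ S p e) {s : ℂ}
    (hs : P p (cR e + s • cR x) = 0) : s.im = 0 ∧ s.re < 0 := by
  have him := rootsRealX hhom hyp hx e hs
  refine ⟨him, ?_⟩
  by_contra hre
  push_neg at hre
  have hs' : s = ((s.re : ℝ) : ℂ) := Complex.ext rfl (by simp [him])
  rw [hs', ← cR_smul, ← cR_add, realP] at hs
  have hev : MvPolynomial.eval (e + s.re • x) p = 0 := by exact_mod_cast hs
  rcases eq_or_lt_of_le hre with h0 | hpos
  · rw [← h0] at hev
    simp only [zero_smul, add_zero] at hev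
    exact (ne_of_lt hyp.1) hev.symm
  · have heq : e + s.re • x = s.re • (x + (s.re)⁻¹ • e) := by
      funext i
      simp only [Pi.add_apply, Pi.smul_apply, smul_eq_mul]
      field_simp
      ring
    rw [heq, hsmulR hhom] at hev
    rcases mul_eq_zero.mp hev with h | h
    · exact (pow_ne_zero _ (ne_of_gt hpos)) h
    · exact hx (s.re)⁻¹ (le_of_lt (by positivity)) h

lemma claimB (hhom : p.IsHomogeneous d) (hyp : Hyperbolic p e)
    {x z : Fin n → ℝ} (hx : x ∈ S p e) (hz : z ∈ S p e) {s : ℂ}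
    (hs : P p (cR z + s • cR x) = 0) : s.im = 0 ∧ s.re < 0 := by
  have hx0 : P p (cR x) ≠ 0 := PxC (Sne hx)
  set Bad : Set ℝ := {θ | 0 ≤ θ ∧ ∃ s : ℂ,
    P p (cR z + ((θ:ℝ):ℂ) • cR e + s • cR x) = 0 ∧ 0 ≤ s.re} with hBad
  have hvcont : ∀ (u : ℕ → ℝ) (l : ℝ), Filter.Tendsto u Filter.atTop (nhds l) →
      Filter.Tendsto (fun k => cR z + (((u k : ℝ):ℂ)) • cR e)
        Filter.atTop (nhds (cR z + (((l:ℝ):ℂ)) • cR e)) := by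
    intro u l hu
    apply Filter.Tendsto.const_add
    apply Filter.Tendsto.smul_const
    exact (Complex.continuous_ofReal.tendsto l).comp hu
  have hcomb : ∀ θ : ℝ, cR z + ((θ:ℝ):ℂ) • cR e = cR (z + θ • e) := by
    intro θ; rw [cR_add, cR_smul]
  have hBadcl : ∀ (u : ℕ → ℝ) (l : ℝ), (∀ k, u k ∈ Bad) →
      Filter.Tendsto u Filter.atTop (nhds l) → l ∈ Set.Ici (0:ℝ) → l ∈ Bad := by
    intro u l hu hul hl
    choose s hs' hre using fun k => (hu k).2
    obtain ⟨sl, φ, hφ, hsφ, hroot⟩ := ml1 hhom hx0 (hvcont u l hul) hs'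
    refine ⟨hl, sl, hroot, ?_⟩
    have hten : Filter.Tendsto (fun k => (s (φ k)).re) Filter.atTop (nhds sl.re) :=
      (Complex.continuous_re.tendsto sl).comp hsφ
    exact ge_of_tendsto hten (Filter.Eventually.of_forall (fun k => hre (φ k)))
  have hGoodcl : ∀ (u : ℕ → ℝ) (l : ℝ), (∀ k, u k ∈ Set.Ici (0:ℝ) \ Bad) →
      Filter.Tendsto u Filter.atTop (nhds l) → l ∈ Set.Ici (0:ℝ) → l ∉ Bad := by
    intro u l hu hul hl hbad
    obtain ⟨-, s₀, hs₀, hre₀⟩ := hbad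
    have him₀ : s₀.im = 0 := by
      apply rootsRealX hhom hyp hx (z + l • e)
      rw [← hcomb l]
      exact hs₀
    have hne₀ : s₀ ≠ 0 := by
      intro h0
      rw [h0, zero_smul, add_zero, hcomb l, realP] at hs₀
      exact Sne (Sshift hz hl) (by exact_mod_cast hs₀)
    have hpos₀ : 0 < s₀.re := by
      rcases eq_or_lt_of_le hre₀ with h | h
      · exact absurd (Complex.ext (h.symm) him₀ : s₀ = 0) hne₀
      · exact h
    obtain ⟨k, r, hr, hrc⟩ := ml2 hhom hx0 (hvcont u l hul) hs₀ hpos₀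
    have hposr : 0 < r.re := by
      have h1 : (s₀ - r).re ≤ ‖s₀ - r‖ :=
        le_trans (le_abs_self _) (by exact Complex.abs_re_le_norm _)
      rw [Complex.sub_re] at h1
      linarith
    exact ((hu k).2) ⟨(hu k).1, r, hr, le_of_lt hposr⟩
  have htail : ∃ θ₀ : ℝ, ∀ θ : ℝ, θ₀ ≤ θ → θ ∈ Set.Ici (0:ℝ) → θ ∉ Bad := by
    by_contra hcon
    push_neg at hcon
    choose θ hθ1 hθ2 hθ3 using fun k : ℕ => hcon ((k:ℝ)+1)
    choose s hs' hre using fun k => (hθ3 k).2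
    have hθpos : ∀ k, (0:ℝ) < θ k := fun k =>
      lt_of_lt_of_le (by positivity) (hθ1 k)
    set u : ℕ → ℂ := fun k => ((θ k)⁻¹ : ℝ) • s k with hudef
    set w : ℕ → (Fin n → ℂ) := fun k => (((θ k : ℝ)):ℂ)⁻¹ • cR z + cR e with hwdef
    have hkey : ∀ k, P p (w k + u k • cR x) = 0 := by
      intro k
      have hc0 : ((θ k : ℝ) : ℂ) ≠ 0 := by
        exact_mod_cast ne_of_gt (hθpos k)
      have heq : ((θ k : ℝ):ℂ) • (w k + u k • cR x)
          = cR z + (((θ k : ℝ)):ℂ) • cR e + s k • cR x := by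
        funext i
        simp only [hwdef, hudef, cR, Pi.add_apply, Pi.smul_apply, smul_eq_mul,
          Complex.real_smul, Complex.ofReal_inv]
        field_simp
      have h2 := hsmulC hhom ((θ k : ℝ):ℂ) (w k + u k • cR x)
      rw [heq, hs' k] at h2
      exact (mul_eq_zero.mp h2.symm).resolve_left (pow_ne_zero _ hc0)
    have hθ_top : Filter.Tendsto θ Filter.atTop Filter.atTop :=
      Filter.tendsto_atTop_mono (fun k => hθ1 k)
        (Filter.tendsto_atTop_add_const_right _ 1 tendsto_natCast_atTop_atTop)
    have hinv : Filter.Tendsto (fun k => ((θ k)⁻¹ : ℝ)) Filter.atTop (nhds 0) :=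
      tendsto_inv_atTop_zero.comp hθ_top
    have hinvC : Filter.Tendsto (fun k => ((((θ k) : ℝ)):ℂ)⁻¹) Filter.atTop (nhds 0) := by
      have := (Complex.continuous_ofReal.tendsto 0).comp hinv
      simpa [Function.comp_def, Complex.ofReal_inv] using this
    have hwlim : Filter.Tendsto w Filter.atTop (nhds (cR e)) := by
      have h1 := (hinvC.smul_const (cR z)).add_const (cR e)
      rw [hwdef]
      simpa using h1
    have hre' : ∀ k, 0 ≤ (u k).re := by
      intro k
      rw [hudef]
      simp only [Complex.smul_re]
      exact mul_nonneg (inv_nonneg.mpr (le_of_lt (hθpos k))) (hre k)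
    obtain ⟨ul, φ, hφ, hulφ, hroot⟩ := ml1 hhom hx0 hwlim hkey
    have hulim : 0 ≤ ul.re := ge_of_tendsto ((Complex.continuous_re.tendsto ul).comp hulφ)
      (Filter.Eventually.of_forall fun k => hre' (φ k))
    exact absurd (eRootsNeg hhom hyp hx hroot).2 (not_lt.mpr hulim)
  obtain ⟨θ₀, htail⟩ := htail
  have hempty : Bad = ∅ := no_bad (fun a b ha hab => le_trans ha hab)
    (fun β hβ => hβ.1) hBadcl hGoodcl θ₀ htail
  have him : s.im = 0 := rootsRealX hhom hyp hx z hs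
  refine ⟨him, ?_⟩
  by_contra hre
  push_neg at hre
  have hmem : (0:ℝ) ∈ Bad := ⟨le_rfl, s, by simpa using hs, hre⟩
  rw [hempty] at hmem
  exact hmem

lemma Sadd (hhom : p.IsHomogeneous d) (hyp : Hyperbolic p e)
    {x z : Fin n → ℝ} (hx : x ∈ S p e) (hz : z ∈ S p e) : x + z ∈ S p e := by
  intro t ht h0
  have hP : P p (cR (z + t • e) + (1:ℂ) • cR x) = 0 := by
    have harg : cR (z + t • e) + (1:ℂ) • cR x = cR (x + z + t • e) := by
      funext i; simp [cR]; ring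
    rw [harg, realP]
    exact_mod_cast h0
  have := (claimB hhom hyp hx (Sshift hz ht) hP).2
  simp at this
  linarith

lemma Slower (hhom : p.IsHomogeneous d) (hyp : Hyperbolic p e)
    {v : Fin n → ℝ} (hv : v ∈ S p e) {t : ℝ} (ht : 0 ≤ t) :
    MvPolynomial.eval e p * t ^ d ≤ |MvPolynomial.eval (v + t • e) p| := by
  have hPe : P p (cR e) ≠ 0 := PeC hyp
  have h1 : ‖(Q p (cR v) (cR e)).eval ((t:ℝ):ℂ)‖ = |MvPolynomial.eval (v + t • e) p| := by
    rw [evalQ, ← cR_smul, ← cR_add, realP]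
    rw [Complex.norm_real, Real.norm_eq_abs]
  have h2 : ‖P p (cR e)‖ = MvPolynomial.eval e p := by
    rw [realP, Complex.norm_real, Real.norm_eq_abs, abs_of_pos hyp.1]
  rw [← h1, ← h2]
  apply lowerbd hhom hPe _ ht
  intro r hr
  have hroot := (Qmemroots hhom hPe).mp hr
  have hneg := SrootsNeg hyp hv hroot
  have h3 : (((t:ℝ):ℂ) - r).re ≤ ‖((t:ℝ):ℂ) - r‖ :=
    le_trans (le_abs_self _) (by exact Complex.abs_re_le_norm _)
  rw [Complex.sub_re, Complex.ofReal_re] at h3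
  linarith [hneg.2]

/-- an auxiliary closed set -/
def Cset (d : ℕ) (p : MvPolynomial (Fin n) ℝ) (e : Fin n → ℝ) : Set (Fin n → ℝ) :=
  {v | ∀ t : ℝ, 0 ≤ t → MvPolynomial.eval e p * t ^ d ≤ |MvPolynomial.eval (v + t • e) p|}

lemma S_eq (hhom : p.IsHomogeneous d) (hyp : Hyperbolic p e) :
    S p e = {v | MvPolynomial.eval v p ≠ 0} ∩ Cset d p e := by
  ext v
  constructor
  · intro hv
    exact ⟨Sne hv, fun t ht => Slower hhom hyp hv ht⟩
  · rintro ⟨hne, hC⟩ t ht h0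
    rcases eq_or_lt_of_le ht with h | h
    · rw [← h] at h0
      simp only [zero_smul, add_zero] at h0
      exact hne h0
    · have := hC t ht
      rw [h0] at this
      simp only [abs_zero] at this
      have hpos : 0 < MvPolynomial.eval e p * t ^ d := by
        have := hyp.1
        positivity
      linarith

lemma Cclosed : IsClosed (Cset d p e) := by
  have : Cset d p e = ⋂ (t : ℝ), ⋂ (_ : 0 ≤ t),
      {v : Fin n → ℝ | MvPolynomial.eval e p * t ^ d ≤ |MvPolynomial.eval (v + t • e) p|} := by
    ext v
    simp [Cset, Set.mem_iInter]
  rw [this]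
  refine isClosed_iInter fun t => isClosed_iInter fun ht => ?_
  apply isClosed_le continuous_const
  exact ((MvPolynomial.continuous_eval p).comp (continuous_id.add continuous_const)).abs

lemma Sopen (hhom : p.IsHomogeneous d) (hyp : Hyperbolic p e) : IsOpen (S p e) := by
  rw [← isClosed_compl_iff]
  apply IsSeqClosed.isClosed
  intro u l hu hul
  by_contra hl
  rw [Set.notMem_compl_iff] at hl
  have hu' : ∀ k, ∃ t : ℝ, 0 ≤ t ∧ MvPolynomial.eval (u k + t • e) p = 0 := by
    intro k
    have := hu k
    rw [Set.mem_compl_iff] at this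
    simp only [S, Set.mem_setOf_eq] at this
    push_neg at this
    obtain ⟨t, ht, h0⟩ := this
    exact ⟨t, ht, h0⟩
  choose t ht hroot using hu'
  have hPe : P p (cR e) ≠ 0 := PeC hyp
  have hkey : ∀ k, P p (cR (u k) + (((t k : ℝ)):ℂ) • cR e) = 0 := by
    intro k
    rw [← cR_smul, ← cR_add, realP]
    exact_mod_cast hroot k
  have hvlim : Filter.Tendsto (fun k => cR (u k)) Filter.atTop (nhds (cR l)) :=
    ((cont_cR.tendsto l)).comp hul
  obtain ⟨sl, φ, hφ, hsφ, hroot'⟩ := ml1 hhom hPe hvlim hkey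
  have hsl_im : sl.im = 0 := by
    have h1 : Filter.Tendsto (fun k => ((((t (φ k)) : ℝ)):ℂ).im) Filter.atTop (nhds sl.im) :=
      (Complex.continuous_im.tendsto sl).comp hsφ
    have h2 : (fun k => ((((t (φ k)) : ℝ)):ℂ).im) = fun _ => (0:ℝ) := by
      funext k; simp
    rw [h2] at h1
    exact tendsto_nhds_unique h1 tendsto_const_nhds
  have hsl_re : 0 ≤ sl.re := by
    have h1 : Filter.Tendsto (fun k => ((((t (φ k)) : ℝ)):ℂ).re) Filter.atTop (nhds sl.re) :=
      (Complex.continuous_re.tendsto sl).comp hsφ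
    exact ge_of_tendsto h1 (Filter.Eventually.of_forall fun k => by
      simpa using ht (φ k))
  have hsl : sl = ((sl.re : ℝ) : ℂ) := Complex.ext rfl (by simp [hsl_im])
  rw [hsl, ← cR_smul, ← cR_add, realP] at hroot'
  exact hl sl.re hsl_re (by exact_mod_cast hroot')

lemma Sconvex (hhom : p.IsHomogeneous d) (hyp : Hyperbolic p e) : Convex ℝ (S p e) := by
  intro x hx y hy a b ha hb hab
  rcases eq_or_lt_of_le ha with h | ha'
  · rw [← h] at hab ⊢
    simp only [zero_smul, zero_add] at hab ⊢
    rw [hab, one_smul]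
    exact hy
  rcases eq_or_lt_of_le hb with h | hb'
  · rw [← h] at hab ⊢
    simp only [zero_smul, add_zero] at hab ⊢
    rw [hab, one_smul]
    exact hx
  exact Sadd hhom hyp (Sscale hhom hx ha') (Sscale hhom hy hb')

end ClaimA

end Garding

/-- (Garding) If a homogeneous polynomial `p` is hyperbolic with respect to `e`, then its
hyperbolicity cone `K(p, e)` is an open convex cone. -/
theorem stmt1 (n d : ℕ) (p : MvPolynomial (Fin n) ℝ) (e : Fin n → ℝ)
    (hhom : p.IsHomogeneous d) (hyp : Hyperbolic p e) :
    IsOpen (hypCone p e) ∧ Convex ℝ (hypCone p e) ∧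
      ∀ c : ℝ, 0 < c → ∀ x ∈ hypCone p e, c • x ∈ hypCone p e := by
  have heS := Garding.eS hhom hyp
  have hSF : Garding.S p e ⊆ {x : Fin n → ℝ | MvPolynomial.eval x p ≠ 0} :=
    fun v hv => Garding.Sne hv
  have hSopen := Garding.Sopen hhom hyp
  have hconv := Garding.Sconvex hhom hyp
  have heC : e ∈ Garding.Cset d p e := by
    have h := (Garding.S_eq hhom hyp) ▸ heS
    exact h.2
  have hF : {x : Fin n → ℝ | MvPolynomial.eval x p ≠ 0} =
      Garding.S p e ∪
        ({x : Fin n → ℝ | MvPolynomial.eval x p ≠ 0} ∩ (Garding.Cset d p e)ᶜ) := by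
    rw [Garding.S_eq hhom hyp]
    ext v
    by_cases h : v ∈ Garding.Cset d p e <;> simp [h]
  have hcone_eq : hypCone p e = Garding.S p e := by
    apply Set.Subset.antisymm
    · have hpre : IsPreconnected (hypCone p e) := isPreconnected_connectedComponentIn
      have hsub : hypCone p e ⊆ {x : Fin n → ℝ | MvPolynomial.eval x p ≠ 0} :=
        connectedComponentIn_subset _ _
      have hv_open : IsOpen ({x : Fin n → ℝ | MvPolynomial.eval x p ≠ 0}
          ∩ (Garding.Cset d p e)ᶜ) := by
        apply IsOpen.inter ?_ (Garding.Cclosed).isOpen_compl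
        have hrw : {x : Fin n → ℝ | MvPolynomial.eval x p ≠ 0}
            = (fun x => MvPolynomial.eval x p) ⁻¹' ({0}ᶜ) := rfl
        rw [hrw]
        exact (isClosed_singleton.isOpen_compl).preimage (MvPolynomial.continuous_eval p)
      have hdisj : Disjoint (Garding.S p e)
          ({x : Fin n → ℝ | MvPolynomial.eval x p ≠ 0} ∩ (Garding.Cset d p e)ᶜ) := by
        apply Set.disjoint_left.mpr
        intro v hv hv2
        have hC : v ∈ Garding.Cset d p e := ((Garding.S_eq hhom hyp) ▸ hv).2
        exact hv2.2 hC
      have hcover : hypCone p e ⊆ Garding.S p e ∪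
          ({x : Fin n → ℝ | MvPolynomial.eval x p ≠ 0} ∩ (Garding.Cset d p e)ᶜ) := by
        rw [← hF]
        exact hsub
      rcases hpre.subset_or_subset hSopen hv_open hdisj hcover with h | h
      · exact h
      · exfalso
        have he_mem : e ∈ hypCone p e :=
          mem_connectedComponentIn (by exact Garding.Sne heS)
        exact (h he_mem).2 heC
    · exact (hconv.isPreconnected).subset_connectedComponentIn heS hSF
  refine ⟨?_, ?_, ?_⟩
  · rw [hcone_eq]; exact hSopen
  · rw [hcone_eq]; exact hconv
  · intro c hc x hx
    rw [hcone_eq] at hx ⊢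
    exact Garding.Sscale hhom hx hc
end

section
/- If a homogeneous polynomial p ∈ ℝ[x₁,…,xₙ] is hyperbolic with respect to e ∈ ℝⁿ, then p is hyperbolic with respect to every point y in the hyperbolicity cone K(p,e). -/
open Polynomial MvPolynomial

-- Auxiliary lemmas

noncomputable def Complex.abs : AbsoluteValue ℂ ℝ where
  toFun z := ‖z‖
  map_mul' := norm_mul
  nonneg' := norm_nonneg
  eq_zero' _ := norm_eq_zero
  add_le' := norm_add_le

theorem Complex.abs_ofReal (r : ℝ) : Complex.abs (r : ℂ) = |r| := by
  show ‖(r : ℂ)‖ = |r|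
  simp

theorem Complex.continuous_abs : Continuous Complex.abs := continuous_norm

lemma coeff_prod_top {n : ℕ} (s : Finset (Fin n)) (g : Fin n → Polynomial ℂ) (k : Fin n → ℕ)
    (h : ∀ i ∈ s, (g i).natDegree ≤ k i) :
    (∏ i ∈ s, g i).coeff (∑ i ∈ s, k i) = ∏ i ∈ s, (g i).coeff (k i) := by
  induction s using Finset.induction_on with
  | empty => simp
  | @insert j s hj ih =>
    rw [Finset.prod_insert hj, Finset.sum_insert hj, Finset.prod_insert hj,
      Polynomial.coeff_mul_add_eq_of_natDegree_le (h j (Finset.mem_insert_self j s))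
        ((Polynomial.natDegree_prod_le _ _).trans
          (Finset.sum_le_sum fun i hi => h i (Finset.mem_insert_of_mem hi))),
      ih fun i hi => h i (Finset.mem_insert_of_mem hi)]

lemma garding_deg_coeff {n d : ℕ} (p : MvPolynomial (Fin n) ℝ) (hhom : p.IsHomogeneous d)
    (v c : Fin n → ℂ) :
    ((MvPolynomial.aeval fun i => Polynomial.C (v i) + Polynomial.C (c i) * Polynomial.X) p).natDegree ≤ d ∧
    ((MvPolynomial.aeval fun i => Polynomial.C (v i) + Polynomial.C (c i) * Polynomial.X) p).coeff d
      = MvPolynomial.aeval c p := by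
  set f : Fin n → Polynomial ℂ := fun i => Polynomial.C (v i) + Polynomial.C (c i) * Polynomial.X with hf
  have hfdeg : ∀ i, (f i).natDegree ≤ 1 := by
    intro i
    refine (Polynomial.natDegree_add_le _ _).trans ?_
    simp [Polynomial.natDegree_C]
    exact (Polynomial.natDegree_C_mul_le _ _).trans (by simp)
  have hfc : ∀ i, (f i).coeff 1 = c i := by
    intro i; simp [hf]
  -- per-monomial facts
  have hmon : ∀ m : Fin n →₀ ℕ, ∀ a : ℝ,
      ((MvPolynomial.aeval f) (monomial m a)).natDegree ≤ m.degree ∧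
      ((MvPolynomial.aeval f) (monomial m a)).coeff m.degree
        = algebraMap ℝ ℂ a * ∏ i ∈ m.support, c i ^ m i := by
    intro m a
    rw [MvPolynomial.aeval_monomial]
    have halg : algebraMap ℝ (Polynomial ℂ) a = Polynomial.C ((a : ℂ)) := by
      rw [Polynomial.algebraMap_apply]; norm_num
    constructor
    · refine (Polynomial.natDegree_mul_le).trans ?_
      rw [halg, Polynomial.natDegree_C, zero_add]
      refine (Polynomial.natDegree_prod_le _ _).trans ?_
      rw [Finsupp.degree_apply]
      exact Finset.sum_le_sum fun i hi =>
        (Polynomial.natDegree_pow_le).trans (by simpa using Nat.mul_le_mul_left (m i) (hfdeg i))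
    · rw [halg, Polynomial.coeff_C_mul]
      rw [Finsupp.degree_apply]; unfold Finsupp.prod
      rw [coeff_prod_top m.support (fun i => f i ^ m i) (fun i => m i)
        (fun i _ => (Polynomial.natDegree_pow_le).trans (by simpa using Nat.mul_le_mul_left (m i) (hfdeg i)))]
      congr 1
      refine Finset.prod_congr rfl fun i _ => ?_
      have := Polynomial.coeff_pow_of_natDegree_le (p := f i) (n := 1) (m := m i) (hfdeg i)
      simpa [hfc i] using this
  have hdeg : ∀ m ∈ p.support, m.degree = d := by
    intro m hm
    have := hhom (MvPolynomial.mem_support_iff.mp hm)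
    exact (DFunLike.congr_fun Finsupp.degree_eq_weight_one m).trans this
  constructor
  · conv_lhs => rw [← MvPolynomial.support_sum_monomial_coeff p]
    rw [map_sum]
    refine Polynomial.natDegree_sum_le_of_forall_le _ _ fun m hm => ?_
    exact (hmon m (MvPolynomial.coeff m p)).1.trans (le_of_eq (hdeg m hm))
  · conv_lhs => rw [← MvPolynomial.support_sum_monomial_coeff p]
    rw [map_sum, Polynomial.finset_sum_coeff]
    rw [MvPolynomial.aeval_def, MvPolynomial.eval₂_eq]
    refine Finset.sum_congr rfl fun m hm => ?_
    rw [← hdeg m hm]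
    exact (hmon m (MvPolynomial.coeff m p)).2

lemma ms_pow_le_prod (s : Multiset ℂ) (a : ℝ) (ha : 0 ≤ a) (f : ℂ → ℝ)
    (h : ∀ w ∈ s, a ≤ f w) : a ^ Multiset.card s ≤ (s.map f).prod := by
  induction s using Multiset.induction_on with
  | empty => simp
  | cons w s ih =>
    rw [Multiset.map_cons, Multiset.prod_cons, Multiset.card_cons, pow_succ, mul_comm]
    exact mul_le_mul (h w (Multiset.mem_cons_self w s))
      (ih fun x hx => h x (Multiset.mem_cons_of_mem hx)) (pow_nonneg ha _)
      (ha.trans (h w (Multiset.mem_cons_self w s)))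

lemma eval_abs_lower (q : Polynomial ℂ) (d : ℕ) (hd : q.natDegree ≤ d)
    (hq : q.coeff d ≠ 0) (c : ℝ) (hr : ∀ r ∈ q.roots, r.im ≤ c) (z : ℂ) (hz : c ≤ z.im) :
    Complex.abs (q.coeff d) * (z.im - c) ^ d ≤ Complex.abs (Polynomial.eval z q) := by
  have hdeq : q.natDegree = d := le_antisymm hd (Polynomial.le_natDegree_of_ne_zero hq)
  have hlead : q.leadingCoeff = q.coeff d := by rw [Polynomial.leadingCoeff, hdeq]
  have hsplit : Splits q := IsAlgClosed.splits q
  have hcard : Multiset.card q.roots = d := by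
    have := hsplit.natDegree_eq_card_roots
    rw [hdeq] at this
    exact this.symm
  have hfac := hsplit.eq_prod_roots
  have heval : Polynomial.eval z q
      = q.coeff d * (q.roots.map fun a => z - a).prod := by
    conv_lhs => rw [hfac]
    rw [Polynomial.eval_mul, Polynomial.eval_C, hlead, Polynomial.eval_multiset_prod,
      Multiset.map_map]
    simp
  rw [heval, map_mul]
  refine mul_le_mul_of_nonneg_left ?_ (AbsoluteValue.nonneg _ _)
  have : Complex.abs (q.roots.map fun a => z - a).prod
      = ((q.roots.map fun a => z - a).map Complex.abs).prod := map_multiset_prod Complex.abs _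
  rw [this, Multiset.map_map]
  have := ms_pow_le_prod q.roots (z.im - c) (by linarith) (fun a => Complex.abs (z - a))
    (fun r hrr => by
      calc z.im - c ≤ z.im - r.im := by have := hr r hrr; linarith
      _ ≤ |(z - r).im| := by rw [Complex.sub_im]; exact le_abs_self _
      _ ≤ Complex.abs (z - r) := Complex.abs_im_le_norm _)
  rwa [hcard] at this

lemma root_bound (q : Polynomial ℂ) (d : ℕ) (hd : q.natDegree ≤ d)
    (hq : q.coeff d ≠ 0) (z : ℂ) (hz : Polynomial.eval z q = 0) :
    Complex.abs z ≤ max 1 ((∑ k ∈ Finset.range d, Complex.abs (q.coeff k)) / Complex.abs (q.coeff d)) := by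
  by_contra hcon
  push_neg at hcon
  obtain ⟨h1, h2⟩ := max_lt_iff.mp hcon
  have habs : (0:ℝ) < Complex.abs (q.coeff d) := (AbsoluteValue.pos _) hq
  have hz1 : (1:ℝ) ≤ Complex.abs z := h1.le
  have heval := Polynomial.eval_eq_sum_range' (Nat.lt_succ_of_le hd) z
  rw [hz, Finset.sum_range_succ] at heval
  rcases Nat.eq_zero_or_pos d with hd0 | hdpos
  · subst hd0; simp at heval; exact hq heval.symm
  have key : Complex.abs (q.coeff d) * Complex.abs z ^ d
      ≤ (∑ k ∈ Finset.range d, Complex.abs (q.coeff k)) * Complex.abs z ^ (d - 1) := by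
    have e1 : q.coeff d * z ^ d = -∑ k ∈ Finset.range d, q.coeff k * z ^ k := by
      linear_combination -heval
    calc Complex.abs (q.coeff d) * Complex.abs z ^ d
        = Complex.abs (q.coeff d * z ^ d) := by rw [map_mul, map_pow]
      _ = Complex.abs (∑ k ∈ Finset.range d, q.coeff k * z ^ k) := by
          rw [e1, AbsoluteValue.map_neg]
      _ ≤ ∑ k ∈ Finset.range d, Complex.abs (q.coeff k * z ^ k) :=
          AbsoluteValue.sum_le _ _ _
      _ ≤ ∑ k ∈ Finset.range d, Complex.abs (q.coeff k) * Complex.abs z ^ (d - 1) := by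
          refine Finset.sum_le_sum fun k hk => ?_
          rw [map_mul, map_pow]
          exact mul_le_mul_of_nonneg_left
            (pow_le_pow_right₀ hz1 (Nat.le_sub_one_of_lt (Finset.mem_range.mp hk)))
            (AbsoluteValue.nonneg _ _)
      _ = (∑ k ∈ Finset.range d, Complex.abs (q.coeff k)) * Complex.abs z ^ (d - 1) := by
          rw [Finset.sum_mul]
  have hzpow : (0:ℝ) < Complex.abs z ^ (d - 1) := pow_pos (lt_of_lt_of_le one_pos hz1) _
  have e2 : Complex.abs z ^ d = Complex.abs z ^ (d - 1) * Complex.abs z := by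
    rw [← pow_succ, Nat.sub_add_cancel hdpos]
  rw [e2, ← mul_assoc] at key
  have key2 : Complex.abs (q.coeff d) * Complex.abs z
      ≤ ∑ k ∈ Finset.range d, Complex.abs (q.coeff k) := by
    have := le_of_mul_le_mul_right (by linarith [key] :
      Complex.abs (q.coeff d) * Complex.abs z * Complex.abs z ^ (d-1)
        ≤ (∑ k ∈ Finset.range d, Complex.abs (q.coeff k)) * Complex.abs z ^ (d-1)) hzpow
    exact this
  have := (div_lt_iff₀ habs).mp h2
  nlinarith [key2, this]

variable {n : ℕ}

lemma bridge (p : MvPolynomial (Fin n) ℝ) (v c : Fin n → ℂ) (z : ℂ) :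
    Polynomial.eval z
        ((MvPolynomial.aeval fun i => Polynomial.C (v i) + Polynomial.C (c i) * Polynomial.X) p)
      = (MvPolynomial.aeval fun i => v i + c i * z) p := by
  have := MvPolynomial.comp_aeval_apply
    ((Polynomial.aeval z : Polynomial ℂ →ₐ[ℂ] ℂ).restrictScalars ℝ)
    (f := fun i => Polynomial.C (v i) + Polynomial.C (c i) * Polynomial.X) p
  simpa using this

lemma bridge2 (p : MvPolynomial (Fin n) ℝ) (x y : Fin n → ℝ) (z : ℂ) :
    Polynomial.aeval z
        ((MvPolynomial.aeval fun i => Polynomial.C (x i) + Polynomial.C (y i) * Polynomial.X) p)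
      = (MvPolynomial.aeval fun i => (x i : ℂ) + (y i : ℂ) * z) p := by
  have := MvPolynomial.comp_aeval_apply (Polynomial.aeval z : Polynomial ℝ →ₐ[ℝ] ℂ)
    (f := fun i => Polynomial.C (x i) + Polynomial.C (y i) * Polynomial.X) p
  simpa using this

lemma conj_aeval (p : MvPolynomial (Fin n) ℝ) (v : Fin n → ℂ) :
    (starRingEnd ℂ) ((MvPolynomial.aeval v) p)
      = (MvPolynomial.aeval fun i => (starRingEnd ℂ) (v i)) p := by
  have := MvPolynomial.comp_aeval_apply (Complex.conjAe.toAlgHom : ℂ →ₐ[ℝ] ℂ) (f := v) p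
  simpa using this

lemma aeval_ofReal (p : MvPolynomial (Fin n) ℝ) (y : Fin n → ℝ) :
    (MvPolynomial.aeval fun i => ((y i : ℝ) : ℂ)) p = ((MvPolynomial.eval y p : ℝ) : ℂ) := by
  have := MvPolynomial.comp_aeval_apply (Algebra.ofId ℝ ℂ) (f := y) p
  simp only [Algebra.ofId_apply, Complex.coe_algebraMap] at this
  rw [← this]
  congr 1

lemma coeff_cont (p : MvPolynomial (Fin n) ℝ) (u : Fin n → ℂ) (k : ℕ) :
    Continuous fun y : Fin n → ℝ =>
      ((MvPolynomial.aeval fun i => Polynomial.C (u i) + Polynomial.C ((y i : ℂ)) * Polynomial.X) p).coeff k := by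
  induction p using MvPolynomial.induction_on generalizing k with
  | C a => simp only [MvPolynomial.aeval_C]; exact continuous_const
  | add p q hp hq =>
    simp only [map_add, Polynomial.coeff_add]
    exact (hp k).add (hq k)
  | mul_X q i hq =>
    simp only [map_mul, MvPolynomial.aeval_X]
    have hrw : ∀ (A : Polynomial ℂ) (b : ℂ),
        A * (Polynomial.C (u i) + Polynomial.C b * Polynomial.X)
          = A * Polynomial.C (u i) + (A * Polynomial.C b) * Polynomial.X := by
      intro A b; ring
    cases k with
    | zero =>
      simp only [hrw, Polynomial.coeff_add, Polynomial.coeff_mul_X_zero, add_zero,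
        Polynomial.coeff_mul_C]
      exact (hq 0).mul continuous_const
    | succ m =>
      simp only [hrw, Polynomial.coeff_add, Polynomial.coeff_mul_X, Polynomial.coeff_mul_C]
      exact ((hq (m+1)).mul continuous_const).add
        ((hq m).mul (Complex.continuous_ofReal.comp (continuous_apply i)))

lemma garding_main {n d : ℕ} (p : MvPolynomial (Fin n) ℝ) (e : Fin n → ℝ)
    (hhom : p.IsHomogeneous d) (hyp : Hyperbolic p e)
    (x : Fin n → ℝ) (ε : ℝ) (hε : 0 < ε) :
    ∀ y ∈ hypCone p e, ∀ z : ℂ, 0 < z.im →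
      |MvPolynomial.eval y p| * z.im ^ d ≤
        Complex.abs (Polynomial.eval z
          ((MvPolynomial.aeval fun i => Polynomial.C ((x i : ℂ) + ε * Complex.I * e i)
            + Polynomial.C ((y i : ℂ)) * Polynomial.X) p)) := by
  classical
  set u : Fin n → ℂ := fun i => (x i : ℂ) + ε * Complex.I * e i with hu
  set Q : (Fin n → ℝ) → Polynomial ℂ := fun w =>
    (MvPolynomial.aeval fun i => Polynomial.C (u i) + Polynomial.C ((w i : ℂ)) * Polynomial.X) p
    with hQdef
  set S : Set (Fin n → ℝ) := {w | MvPolynomial.eval w p ≠ 0} with hS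
  have heS : e ∈ S := hyp.1.ne'
  have hKsub : hypCone p e ⊆ S := connectedComponentIn_subset _ _
  have heK : e ∈ hypCone p e := mem_connectedComponentIn heS
  have hKconn : IsPreconnected (hypCone p e) := isPreconnected_connectedComponentIn
  -- basic facts about Q
  have hQdeg : ∀ w, (Q w).natDegree ≤ d := fun w => (garding_deg_coeff p hhom u _).1
  have hQcoeff : ∀ w, (Q w).coeff d = ((MvPolynomial.eval w p : ℝ) : ℂ) := fun w =>
    ((garding_deg_coeff p hhom u _).2).trans (aeval_ofReal p w)
  have habs : ∀ w, Complex.abs ((Q w).coeff d) = |MvPolynomial.eval w p| := fun w => by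
    rw [hQcoeff w, Complex.abs_ofReal]
  -- hyperbolicity: nonvanishing off the real axis in direction e
  have hnz : ∀ (x' : Fin n → ℝ) (z : ℂ), z.im ≠ 0 →
      (MvPolynomial.aeval fun i => (x' i : ℂ) + (e i : ℂ) * z) p ≠ 0 := by
    intro x' z him h0
    exact him (hyp.2 x' z (by rw [bridge2]; exact h0))
  -- no real roots of Q w, for any w
  have hreal : ∀ (w : Fin n → ℝ) (r : ℂ), r.im = 0 → Polynomial.eval r (Q w) ≠ 0 := by
    intro w r hr0 h0
    obtain ⟨a, ha⟩ : ∃ a : ℝ, r = (a : ℂ) := ⟨r.re, Complex.ext rfl (by simp [hr0])⟩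
    rw [hQdef, bridge] at h0
    have hvec : (fun i => u i + (w i : ℂ) * r)
        = fun i => ((x i + a * w i : ℝ) : ℂ) + (e i : ℂ) * (ε * Complex.I) := by
      funext i
      rw [hu, ha]; push_cast; ring
    rw [hvec] at h0
    exact hnz _ (ε * Complex.I) (by simp [hε.ne']) h0
  -- membership criterion
  set T : Set (Fin n → ℝ) := {w | ∀ z : ℂ, 0 < z.im →
    |MvPolynomial.eval w p| * z.im ^ d ≤ Complex.abs (Polynomial.eval z (Q w))} with hT
  have hmemT : ∀ w, MvPolynomial.eval w p ≠ 0 →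
      (∀ r ∈ (Q w).roots, r.im ≤ 0) → w ∈ T := by
    intro w hw hroots z hz
    have h0 := eval_abs_lower (Q w) d (hQdeg w) (by rw [hQcoeff w]; exact_mod_cast hw) 0
      (by simpa using hroots) z (by linarith)
    rw [habs w] at h0
    simpa using h0
  have hrootsT : ∀ w ∈ T, MvPolynomial.eval w p ≠ 0 → ∀ r ∈ (Q w).roots, r.im < 0 := by
    intro w hwT hw r hr
    have hroot : Polynomial.eval r (Q w) = 0 := (Polynomial.mem_roots'.mp hr).2
    rcases lt_trichotomy r.im 0 with h | h | h
    · exact h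
    · exact absurd hroot (hreal w r h)
    · exfalso
      have := hwT r h
      rw [hroot] at this
      simp only [map_zero] at this
      have h1 : 0 < |MvPolynomial.eval w p| := abs_pos.mpr hw
      have h2 : 0 < r.im ^ d := pow_pos h d
      nlinarith
  -- e ∈ T
  have heT : e ∈ T := by
    refine hmemT e hyp.1.ne' fun r hr => ?_
    have hroot : Polynomial.eval r (Q e) = 0 := (Polynomial.mem_roots'.mp hr).2
    rw [hQdef, bridge] at hroot
    have hvec : (fun i => u i + (e i : ℂ) * r)
        = fun i => (x i : ℂ) + (e i : ℂ) * (r + ε * Complex.I) := by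
      funext i; rw [hu]; ring
    rw [hvec] at hroot
    have him : (r + ε * Complex.I).im = 0 := by
      by_contra him
      exact hnz x _ him hroot
    simp only [Complex.add_im, Complex.mul_im, Complex.ofReal_re, Complex.I_im,
      Complex.ofReal_im, Complex.I_re, mul_zero, zero_mul, add_zero, mul_one] at him
    linarith
  -- T is closed
  have hTclosed : IsClosed T := by
    have hTeq : T = ⋂ z : ℂ, {w | 0 < z.im →
        |MvPolynomial.eval w p| * z.im ^ d ≤ Complex.abs (Polynomial.eval z (Q w))} := by
      ext w; simp only [hT, Set.mem_setOf_eq, Set.mem_iInter]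
    rw [hTeq]
    refine isClosed_iInter fun z => ?_
    by_cases hz : 0 < z.im
    · have hset : {w : Fin n → ℝ | 0 < z.im →
          |MvPolynomial.eval w p| * z.im ^ d ≤ Complex.abs (Polynomial.eval z (Q w))}
          = {w : Fin n → ℝ |
          |MvPolynomial.eval w p| * z.im ^ d ≤ Complex.abs (Polynomial.eval z (Q w))} := by
        ext w; simp [hz]
      rw [hset]
      have h1 : Continuous fun w : Fin n → ℝ => |MvPolynomial.eval w p| * z.im ^ d := by
        have he : (fun w : Fin n → ℝ => |MvPolynomial.eval w p| * z.im ^ d)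
            = fun w => Complex.abs ((Q w).coeff d) * z.im ^ d := by
          funext w; rw [habs w]
        rw [he]
        exact (Complex.continuous_abs.comp (coeff_cont p u d)).mul continuous_const
      have h2 : Continuous fun w : Fin n → ℝ => Complex.abs (Polynomial.eval z (Q w)) := by
        have he : (fun w : Fin n → ℝ => Polynomial.eval z (Q w))
            = fun w => ∑ k ∈ Finset.range (d+1), (Q w).coeff k * z ^ k := by
          funext w; exact Polynomial.eval_eq_sum_range' (Nat.lt_succ_of_le (hQdeg w)) z
        refine Complex.continuous_abs.comp ?_
        rw [he]
        exact continuous_finset_sum _ fun k _ => (coeff_cont p u k).mul continuous_const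
      exact isClosed_le h1 h2
    · have hset : {w : Fin n → ℝ | 0 < z.im →
          |MvPolynomial.eval w p| * z.im ^ d ≤ Complex.abs (Polynomial.eval z (Q w))}
          = Set.univ := by
        ext w; simp [hz]
      rw [hset]; exact isClosed_univ
  -- openness
  have hopen : ∀ y₀ ∈ T, MvPolynomial.eval y₀ p ≠ 0 → ∃ N : Set (Fin n → ℝ),
      IsOpen N ∧ y₀ ∈ N ∧ ∀ y ∈ N, MvPolynomial.eval y p ≠ 0 → y ∈ T := by
    intro y₀ hy₀T hy₀
    obtain ⟨δ, hδpos, hδ⟩ : ∃ δ : ℝ, 0 < δ ∧ ∀ r ∈ (Q y₀).roots, r.im ≤ -δ := by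
      rcases (Q y₀).roots.toFinset.eq_empty_or_nonempty with hemp | hne
      · refine ⟨1, one_pos, fun r hr => absurd (Multiset.mem_toFinset.mpr hr) (by simp [hemp])⟩
      · obtain ⟨r₀, hr₀mem, hr₀max⟩ := Finset.exists_max_image _ Complex.im hne
        refine ⟨-r₀.im, ?_, fun r hr => ?_⟩
        · have := hrootsT y₀ hy₀T hy₀ r₀ (Multiset.mem_toFinset.mp hr₀mem); linarith
        · have := hr₀max r (Multiset.mem_toFinset.mpr hr); linarith
    set L₀ : ℝ := |MvPolynomial.eval y₀ p| with hL₀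
    have hL₀pos : 0 < L₀ := abs_pos.mpr hy₀
    set Sig : ℝ := ∑ k ∈ Finset.range d, Complex.abs ((Q y₀).coeff k) with hSig
    have hSignn : 0 ≤ Sig := Finset.sum_nonneg fun k _ => AbsoluteValue.nonneg _ _
    set B : ℝ := Sig + d * (L₀ / 2) with hB
    have hBnn : 0 ≤ B := by positivity
    set R : ℝ := max 1 (B / (L₀ / 2)) with hR
    have hR1 : (1:ℝ) ≤ R := le_max_left _ _
    have hRd : (0:ℝ) < R ^ d := pow_pos (lt_of_lt_of_le one_pos hR1) d
    set η : ℝ := min (L₀ / 2) (L₀ * δ ^ d / (2 * (d+1) * R ^ d)) with hη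
    have hηpos : 0 < η := lt_min (by linarith) (by positivity)
    have hη1 : η ≤ L₀ / 2 := min_le_left _ _
    have hη2 : η ≤ L₀ * δ ^ d / (2 * (d+1) * R ^ d) := min_le_right _ _
    refine ⟨⋂ k ∈ Finset.range (d+1), {y | Complex.abs ((Q y).coeff k - (Q y₀).coeff k) < η},
      ?_, ?_, ?_⟩
    · refine isOpen_biInter_finset fun k _ => ?_
      exact isOpen_lt (Complex.continuous_abs.comp ((coeff_cont p u k).sub continuous_const))
        continuous_const
    · refine Set.mem_iInter₂.mpr fun k _ => ?_
      simpa using hηpos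
    · intro y hyN hy
      refine hmemT y hy fun r hr => ?_
      by_contra himneg
      push_neg at himneg
      have hroot : Polynomial.eval r (Q y) = 0 := (Polynomial.mem_roots'.mp hr).2
      have hΔ : ∀ k ∈ Finset.range (d+1),
          Complex.abs ((Q y).coeff k - (Q y₀).coeff k) < η := fun k hk =>
        Set.mem_iInter₂.mp hyN k hk
      have habs0 : Complex.abs ((Q y₀).coeff d) = L₀ := habs y₀
      have hcd : L₀ / 2 ≤ Complex.abs ((Q y).coeff d) := by
        have h1 := hΔ d (Finset.self_mem_range_succ d)
        have h3 := abs_le.mp (AbsoluteValue.abs_abv_sub_le_abv_sub Complex.abs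
          ((Q y).coeff d) ((Q y₀).coeff d))
        rw [habs0] at h3
        linarith [h3.1]
      have hcdne : (Q y).coeff d ≠ 0 := by
        rw [hQcoeff y]; exact_mod_cast hy
      have hSy : ∑ k ∈ Finset.range d, Complex.abs ((Q y).coeff k) ≤ B := by
        have : ∀ k ∈ Finset.range d,
            Complex.abs ((Q y).coeff k) ≤ Complex.abs ((Q y₀).coeff k) + η := by
          intro k hk
          have h1 := hΔ k (Finset.mem_range.mp hk |>.trans (Nat.lt_succ_self d) |> Finset.mem_range.mpr)
          calc Complex.abs ((Q y).coeff k)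
              = Complex.abs ((Q y₀).coeff k + ((Q y).coeff k - (Q y₀).coeff k)) := by ring_nf
            _ ≤ Complex.abs ((Q y₀).coeff k) + Complex.abs ((Q y).coeff k - (Q y₀).coeff k) :=
              AbsoluteValue.add_le _ _ _
            _ ≤ Complex.abs ((Q y₀).coeff k) + η := by linarith
        calc ∑ k ∈ Finset.range d, Complex.abs ((Q y).coeff k)
            ≤ ∑ k ∈ Finset.range d, (Complex.abs ((Q y₀).coeff k) + η) :=
            Finset.sum_le_sum this
          _ = Sig + d * η := by rw [Finset.sum_add_distrib]; simp [hSig, mul_comm]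
          _ ≤ B := by rw [hB]; nlinarith
      have hrR : Complex.abs r ≤ R := by
        refine (root_bound (Q y) d (hQdeg y) hcdne r hroot).trans ?_
        refine max_le_max le_rfl ?_
        exact div_le_div₀ hBnn hSy (by linarith) hcd
      have hdiff : Complex.abs (Polynomial.eval r (Q y₀)) ≤ (d+1) * η * R ^ d := by
        have he0 : Polynomial.eval r (Q y₀)
            = ∑ k ∈ Finset.range (d+1), ((Q y₀).coeff k - (Q y).coeff k) * r ^ k := by
          rw [Polynomial.eval_eq_sum_range' (Nat.lt_succ_of_le (hQdeg y₀)) r]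
          have hey : (0:ℂ) = ∑ k ∈ Finset.range (d+1), (Q y).coeff k * r ^ k := by
            rw [← Polynomial.eval_eq_sum_range' (Nat.lt_succ_of_le (hQdeg y)) r, hroot]
          rw [show (∑ k ∈ Finset.range (d+1), ((Q y₀).coeff k - (Q y).coeff k) * r ^ k)
            = ∑ k ∈ Finset.range (d+1), (Q y₀).coeff k * r ^ k
              - ∑ k ∈ Finset.range (d+1), (Q y).coeff k * r ^ k by
            rw [← Finset.sum_sub_distrib]; congr 1; funext k; ring]
          rw [← hey, sub_zero]
        rw [he0]
        calc Complex.abs (∑ k ∈ Finset.range (d+1), ((Q y₀).coeff k - (Q y).coeff k) * r ^ k)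
            ≤ ∑ k ∈ Finset.range (d+1),
              Complex.abs (((Q y₀).coeff k - (Q y).coeff k) * r ^ k) :=
            AbsoluteValue.sum_le _ _ _
          _ ≤ ∑ k ∈ Finset.range (d+1), η * R ^ d := by
            refine Finset.sum_le_sum fun k hk => ?_
            rw [map_mul, map_pow]
            have h1 : Complex.abs ((Q y₀).coeff k - (Q y).coeff k) ≤ η := by
              rw [AbsoluteValue.map_sub]
              exact (hΔ k hk).le
            have h2 : Complex.abs r ^ k ≤ R ^ d := by
              calc Complex.abs r ^ k ≤ R ^ k :=
                  pow_le_pow_left₀ (AbsoluteValue.nonneg _ _) hrR k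
                _ ≤ R ^ d := pow_le_pow_right₀ hR1 (Nat.lt_succ_iff.mp (Finset.mem_range.mp hk))
            exact mul_le_mul h1 h2 (by positivity) hηpos.le
          _ = (d+1) * η * R ^ d := by
            rw [Finset.sum_const, Finset.card_range]
            push_cast; ring
      have hlow : L₀ * δ ^ d ≤ Complex.abs (Polynomial.eval r (Q y₀)) := by
        have h0 := eval_abs_lower (Q y₀) d (hQdeg y₀)
          (by rw [hQcoeff y₀]; exact_mod_cast hy₀) (-δ) hδ r (by linarith)
        rw [habs0] at h0
        have h1 : δ ^ d ≤ (r.im - -δ) ^ d :=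
          pow_le_pow_left₀ hδpos.le (by linarith) d
        nlinarith
      have hfinal : ((d:ℝ)+1) * η * R ^ d ≤ L₀ * δ ^ d / 2 := by
        have hd1 : (0:ℝ) < (d:ℝ)+1 := by positivity
        have h1 : ((d:ℝ)+1) * η * R ^ d
            ≤ ((d:ℝ)+1) * (L₀ * δ ^ d / (2 * (d+1) * R ^ d)) * R ^ d :=
          mul_le_mul_of_nonneg_right (mul_le_mul_of_nonneg_left hη2 hd1.le) hRd.le
        refine h1.trans (le_of_eq ?_)
        field_simp
      have hpos : 0 < L₀ * δ ^ d := by positivity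
      linarith [hlow, hdiff, hfinal]
  -- clopen argument
  haveI : PreconnectedSpace ↥(hypCone p e) := Subtype.preconnectedSpace hKconn
  have hAclosed : IsClosed (Subtype.val ⁻¹' T : Set ↥(hypCone p e)) :=
    hTclosed.preimage continuous_subtype_val
  have hAopen : IsOpen (Subtype.val ⁻¹' T : Set ↥(hypCone p e)) := by
    rw [isOpen_iff_mem_nhds]
    rintro ⟨y₀, hy₀K⟩ hy₀A
    obtain ⟨N, hNopen, hy₀N, hN⟩ := hopen y₀ hy₀A (hKsub hy₀K)
    refine Filter.mem_of_superset
      ((hNopen.preimage continuous_subtype_val).mem_nhds hy₀N) ?_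
    exact fun b hb => hN b.val hb (hKsub b.2)
  have hAuniv : (Subtype.val ⁻¹' T : Set ↥(hypCone p e)) = Set.univ :=
    IsClopen.eq_univ ⟨hAclosed, hAopen⟩ ⟨⟨e, heK⟩, heT⟩
  intro y hyK z hz
  have hyT : y ∈ T := by
    have : (⟨y, hyK⟩ : ↥(hypCone p e)) ∈ (Subtype.val ⁻¹' T : Set ↥(hypCone p e)) := by
      rw [hAuniv]; trivial
    exact this
  exact hyT z hz


/-- (Garding) If a homogeneous polynomial `p` is hyperbolic with respect to `e`, then `p`
is hyperbolic with respect to every point of the hyperbolicity cone `K(p, e)`. -/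
theorem stmt2 (n d : ℕ) (p : MvPolynomial (Fin n) ℝ) (e : Fin n → ℝ)
    (hhom : p.IsHomogeneous d) (hyp : Hyperbolic p e) :
    ∀ y ∈ hypCone p e, Hyperbolic p y := by
  intro y hyK
  have hKsub : hypCone p e ⊆ {w : Fin n → ℝ | MvPolynomial.eval w p ≠ 0} :=
    connectedComponentIn_subset _ _
  have heS : e ∈ {w : Fin n → ℝ | MvPolynomial.eval w p ≠ 0} := hyp.1.ne'
  have heK : e ∈ hypCone p e := mem_connectedComponentIn heS
  have hKconn : IsPreconnected (hypCone p e) := isPreconnected_connectedComponentIn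
  have hy : MvPolynomial.eval y p ≠ 0 := hKsub hyK
  constructor
  · -- positivity on the cone
    by_contra hneg
    push_neg at hneg
    have hlt : MvPolynomial.eval y p < 0 := lt_of_le_of_ne hneg hy
    have hcont : Continuous fun w : Fin n → ℝ => MvPolynomial.eval w p := by
      have h1 := coeff_cont p (fun _ => (0:ℂ)) d
      have h2 : (fun w : Fin n → ℝ => MvPolynomial.eval w p) = fun w =>
          (((MvPolynomial.aeval fun i => Polynomial.C ((0:ℂ))
            + Polynomial.C ((w i : ℂ)) * Polynomial.X) p).coeff d).re := by
        funext w
        rw [(garding_deg_coeff p hhom (fun _ => 0) _).2.trans (aeval_ofReal p w)]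
        exact (Complex.ofReal_re _).symm
      rw [h2]
      exact Complex.continuous_re.comp h1
    have h0mem : (0:ℝ) ∈ Set.Icc (MvPolynomial.eval y p) (MvPolynomial.eval e p) :=
      ⟨hlt.le, hyp.1.le⟩
    obtain ⟨w, hwK, hw0⟩ := hKconn.intermediate_value hyK heK hcont.continuousOn h0mem
    exact hKsub hwK hw0
  · -- real-rootedness in direction y
    intro x z hz0
    by_contra him
    rw [bridge2] at hz0
    have main : ∀ z' : ℂ, 0 < z'.im →
        (MvPolynomial.aeval fun i => (x i : ℂ) + (y i : ℂ) * z') p ≠ 0 := by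
      intro z' hz' h0
      set P : Polynomial ℂ := (MvPolynomial.aeval fun i =>
        Polynomial.C ((x i : ℂ) + (y i : ℂ) * z') + Polynomial.C ((e i : ℂ)) * Polynomial.X) p
        with hP
      have hg : ∀ ε : ℝ, Polynomial.eval ((ε : ℂ) * Complex.I) P
          = (MvPolynomial.aeval fun i =>
              ((x i : ℂ) + ε * Complex.I * e i) + (y i : ℂ) * z') p := by
        intro ε
        have hv : (fun i => ((x i : ℂ) + (y i:ℂ)*z') + (e i:ℂ)*((ε:ℂ)*Complex.I))
            = fun i => ((x i : ℂ) + ε * Complex.I * e i) + (y i : ℂ) * z' := by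
          funext i; ring
        rw [hP, bridge, hv]
      have hkey : ∀ ε : ℝ, 0 < ε → |MvPolynomial.eval y p| * z'.im ^ d
          ≤ Complex.abs (Polynomial.eval ((ε:ℂ) * Complex.I) P) := by
        intro ε hε
        have hmain := garding_main p e hhom hyp x ε hε y hyK z' hz'
        rw [bridge] at hmain
        rw [hg ε]
        exact hmain
      have hcontP : Continuous fun ε : ℝ =>
          Complex.abs (Polynomial.eval ((ε:ℂ) * Complex.I) P) := by
        refine Complex.continuous_abs.comp ?_
        exact P.continuous.comp ((Complex.continuous_ofReal).mul continuous_const)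
      have hlim : Filter.Tendsto (fun ε : ℝ =>
          Complex.abs (Polynomial.eval ((ε:ℂ) * Complex.I) P)) (nhdsWithin 0 (Set.Ioi 0))
          (nhds (Complex.abs (Polynomial.eval (((0:ℝ):ℂ) * Complex.I) P))) :=
        (hcontP.tendsto 0).mono_left nhdsWithin_le_nhds
      have hev : ∀ᶠ (ε : ℝ) in nhdsWithin (0:ℝ) (Set.Ioi (0:ℝ)),
          |MvPolynomial.eval y p| * z'.im ^ d
            ≤ Complex.abs (Polynomial.eval ((ε:ℂ) * Complex.I) P) :=
        eventually_nhdsWithin_of_forall fun ε hε => hkey ε hε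
      have hge := ge_of_tendsto hlim hev
      have hzero : Polynomial.eval (((0:ℝ):ℂ) * Complex.I) P = 0 := by
        rw [hg 0, ← h0]
        have hv : (fun i => ((x i : ℂ) + ((0:ℝ):ℂ) * Complex.I * e i) + (y i : ℂ) * z')
            = fun i => (x i : ℂ) + (y i : ℂ) * z' := by
          funext i; push_cast; ring
        rw [hv]
      rw [hzero] at hge
      simp only [map_zero] at hge
      have hpos : 0 < |MvPolynomial.eval y p| * z'.im ^ d := by
        have := abs_pos.mpr hy
        positivity
      linarith
    rcases lt_trichotomy z.im 0 with hlt' | heq' | hgt'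
    · have h0c := conj_aeval p (fun i => (x i:ℂ) + (y i:ℂ) * z)
      rw [hz0, map_zero] at h0c
      have hvec : (fun i => (starRingEnd ℂ) ((x i:ℂ) + (y i:ℂ) * z))
          = fun i => (x i : ℂ) + (y i : ℂ) * ((starRingEnd ℂ) z) := by
        funext i; simp [map_add, map_mul, Complex.conj_ofReal]
      rw [hvec] at h0c
      exact main ((starRingEnd ℂ) z) (by simpa [Complex.conj_im] using hlt') h0c.symm
    · exact him heq'
    · exact main z hgt' hz0
end

section
/- If a sequence of real univariate polynomials of degree at most n, each real-rooted, converges coefficient-wise to a polynomial p, then p is real-rooted. -/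
open Polynomial

open Nat

private lemma iterDeriv_linear_mul (a : ℂ) (Q : ℂ[X]) (k : ℕ) :
    derivative^[k+1] ((X - C a) * Q) =
      (X - C a) * derivative^[k+1] Q + C ((k : ℂ) + 1) * derivative^[k] Q := by
  induction k with
  | zero =>
    simp [derivative_mul]
    ring
  | succ k ih =>
    rw [Function.iterate_succ_apply', ih]
    rw [derivative_add, derivative_mul, derivative_mul, derivative_C]
    simp [Function.iterate_succ_apply']
    ring

private lemma abs_re_sub_le (z : ℂ) (a : ℝ) :
    ‖(z.re : ℂ) - (a : ℂ)‖ ≤ ‖z - (a : ℂ)‖ := by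
  have h1 : ‖(z.re : ℂ) - (a : ℂ)‖ = |(z - (a : ℂ)).re| := by
    rw [← Complex.ofReal_sub, Complex.norm_real, Real.norm_eq_abs]
    simp
  rw [h1]
  exact Complex.abs_re_le_norm _

private lemma abs_im_le_sub (z : ℂ) (a : ℝ) :
    |z.im| ≤ ‖z - (a : ℂ)‖ := by
  have : |(z - (a : ℂ)).im| ≤ ‖z - (a : ℂ)‖ := Complex.abs_im_le_norm _
  simpa using this

private lemma key_ineq (z : ℂ) (c : ℂ) (s : Multiset ℝ) :
    ∀ k : ℕ, |z.im| ^ k *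
        ‖(derivative^[k]
          (C c * (s.map (fun r : ℝ => X - C (r : ℂ))).prod)).eval (z.re : ℂ)‖ ≤
      (k ! : ℝ) * ((Multiset.card s).choose k : ℝ) *
        ‖(C c * (s.map (fun r : ℝ => X - C (r : ℂ))).prod).eval z‖ := by
  induction s using Multiset.induction_on with
  | empty =>
    intro k
    rcases k with _ | k
    · simp
    · rw [Multiset.map_zero, Multiset.prod_zero, mul_one,
        iterate_derivative_C (Nat.succ_pos k)]
      simp only [eval_zero, map_zero, norm_zero, mul_zero]
      positivity
  | cons a t ih =>
    intro k
    have hfact : C c * ((a ::ₘ t).map (fun r : ℝ => X - C (r : ℂ))).prod =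
        (X - C (a : ℂ)) * (C c * (t.map (fun r : ℝ => X - C (r : ℂ))).prod) := by
      rw [Multiset.map_cons, Multiset.prod_cons]; ring
    set Q := C c * (t.map (fun r : ℝ => X - C (r : ℂ))).prod with hQ
    set m := Multiset.card t with hm
    have hcard : Multiset.card (a ::ₘ t) = m + 1 := by simp [hm]
    set w := ‖z - (a : ℂ)‖ with hw
    have hxa : ‖(z.re : ℂ) - (a : ℂ)‖ ≤ w := abs_re_sub_le z a
    have hyw : |z.im| ≤ w := abs_im_le_sub z a
    set E := ‖Q.eval z‖ with hE
    have hPz : ‖((X - C (a : ℂ)) * Q).eval z‖ = w * E := by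
      rw [eval_mul, norm_mul, eval_sub, eval_X, eval_C]
    rw [hfact, hPz, hcard]
    have hy0 : (0 : ℝ) ≤ |z.im| := abs_nonneg _
    have hw0 : (0 : ℝ) ≤ w := hy0.trans hyw
    have hE0 : (0 : ℝ) ≤ E := by rw [hE]; positivity
    rcases k with _ | k
    · simp only [Function.iterate_zero_apply, pow_zero, one_mul, Nat.factorial_zero,
        Nat.choose_zero_right, Nat.cast_one, eval_mul, norm_mul, eval_sub, eval_X, eval_C]
      have h0 := ih 0
      simp only [Function.iterate_zero_apply, pow_zero, one_mul, Nat.factorial_zero,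
        Nat.choose_zero_right, Nat.cast_one] at h0
      calc ‖(z.re : ℂ) - (a : ℂ)‖ * ‖Q.eval (z.re : ℂ)‖
          ≤ w * E := mul_le_mul hxa h0 (by positivity) hw0
        _ = 1 * 1 * (w * E) := by ring
        _ ≤ _ := by norm_num
    · rw [iterDeriv_linear_mul]
      set A := ‖(derivative^[k+1] Q).eval (z.re : ℂ)‖ with hA
      set B := ‖(derivative^[k] Q).eval (z.re : ℂ)‖ with hB
      have hA0 : (0 : ℝ) ≤ A := by rw [hA]; positivity
      have hB0 : (0 : ℝ) ≤ B := by rw [hB]; positivity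
      have heval : ‖((X - C (a : ℂ)) * derivative^[k+1] Q
            + C ((k : ℂ) + 1) * derivative^[k] Q).eval (z.re : ℂ)‖
          ≤ ‖(z.re : ℂ) - (a : ℂ)‖ * A + ((k : ℝ) + 1) * B := by
        rw [eval_add, eval_mul, eval_mul, eval_sub, eval_X, eval_C, eval_C]
        refine (norm_add_le _ _).trans ?_
        have hs : ‖(k : ℂ) + 1‖ = (k : ℝ) + 1 := by
          rw [← Complex.ofReal_natCast, ← Complex.ofReal_one, ← Complex.ofReal_add,
            Complex.norm_real, Real.norm_eq_abs, abs_of_nonneg (by positivity)]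
        rw [norm_mul, norm_mul, hs]
      have ih1 := ih (k+1)
      have ih0 := ih k
      have hxw2 : ‖(z.re : ℂ) - (a : ℂ)‖ ≤ w := hxa
      have step1 : |z.im| ^ (k+1) *
            ‖((X - C (a : ℂ)) * derivative^[k+1] Q
              + C ((k : ℂ) + 1) * derivative^[k] Q).eval (z.re : ℂ)‖
          ≤ |z.im| ^ (k+1) * (‖(z.re : ℂ) - (a : ℂ)‖ * A + ((k : ℝ) + 1) * B) := by
        exact mul_le_mul_of_nonneg_left heval (by positivity)
      refine step1.trans ?_
      have expand : |z.im| ^ (k+1) * (‖(z.re : ℂ) - (a : ℂ)‖ * A + ((k : ℝ) + 1) * B)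
          = ‖(z.re : ℂ) - (a : ℂ)‖ * (|z.im| ^ (k+1) * A)
            + ((k : ℝ) + 1) * |z.im| * (|z.im| ^ k * B) := by ring
      rw [expand]
      have t1 : ‖(z.re : ℂ) - (a : ℂ)‖ * (|z.im| ^ (k+1) * A)
          ≤ w * (((k+1)! : ℝ) * (m.choose (k+1) : ℝ) * E) :=
        mul_le_mul hxa ih1 (by positivity) hw0
      have t2 : ((k : ℝ) + 1) * |z.im| * (|z.im| ^ k * B)
          ≤ ((k : ℝ) + 1) * w * ((k ! : ℝ) * (m.choose k : ℝ) * E) := by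
        apply mul_le_mul _ ih0 (by positivity) (by positivity)
        exact mul_le_mul_of_nonneg_left hyw (by positivity)
      refine (add_le_add t1 t2).trans ?_
      have pascal : ((m+1).choose (k+1) : ℝ) = (m.choose k : ℝ) + (m.choose (k+1) : ℝ) := by
        rw [Nat.choose_succ_succ]; push_cast; ring
      have hfac : (((k+1)! : ℝ)) = ((k : ℝ) + 1) * (k ! : ℝ) := by
        rw [Nat.factorial_succ]; push_cast; ring
      rw [hfac, pascal]
      ring_nf
      have c1 : (0:ℝ) ≤ (k ! : ℝ) := by positivity
      have c2 : (0:ℝ) ≤ (m.choose k : ℝ) := by positivity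
      have c3 : (0:ℝ) ≤ (m.choose (k+1) : ℝ) := by positivity
      nlinarith [c1, c2, c3, hw0, hE0]

/-- A univariate real polynomial is real-rooted if it is identically zero or
all of its complex roots are real. -/
def RealRooted (q : Polynomial ℝ) : Prop :=
  q = 0 ∨ ∀ z : ℂ, Polynomial.aeval z q = 0 → z.im = 0

private lemma key2 (p : ℝ[X]) (hp : RealRooted p) (z : ℂ) (k : ℕ) :
    |z.im| ^ k * |(derivative^[k] p).eval z.re| ≤
      (k ! : ℝ) * (p.natDegree.choose k : ℝ) * ‖aeval z p‖ := by
  by_cases hp0 : p = 0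
  · simp [hp0]
  have hroot : ∀ z : ℂ, Polynomial.aeval z p = 0 → z.im = 0 := hp.resolve_left hp0
  set P := p.map (algebraMap ℝ ℂ) with hPdef
  have hP0 : P ≠ 0 := by
    simpa [hPdef, Polynomial.map_eq_zero_iff (algebraMap ℝ ℂ).injective] using hp0
  have hsplits : Splits P := IsAlgClosed.splits P
  have hcard : Multiset.card P.roots = P.natDegree := (splits_iff_card_roots).mp hsplits
  have hfact := C_leadingCoeff_mul_prod_multiset_X_sub_C hcard
  have him : ∀ r ∈ P.roots, r.im = 0 := by
    intro r hr
    apply hroot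
    have h2 : P.eval r = 0 := (mem_roots hP0).mp hr
    rw [aeval_def, ← eval_map]
    exact h2
  have hmm : (P.roots.map Complex.re).map (fun r : ℝ => X - C (r : ℂ))
      = P.roots.map (fun r : ℂ => X - C r) := by
    rw [Multiset.map_map]
    refine Multiset.map_congr rfl fun r hr => ?_
    simp only [Function.comp_apply]
    congr 1
    exact congrArg C (Complex.ext rfl (by simp [him r hr]))
  have hfact2 : C P.leadingCoeff *
      ((P.roots.map Complex.re).map (fun r : ℝ => X - C (r : ℂ))).prod = P := by
    rw [hmm]; exact hfact
  have hkey := key_ineq z P.leadingCoeff (P.roots.map Complex.re) k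
  rw [hfact2] at hkey
  have hcard2 : Multiset.card (P.roots.map Complex.re) = p.natDegree := by
    rw [Multiset.card_map, hcard, hPdef,
      natDegree_map_eq_of_injective (algebraMap ℝ ℂ).injective]
  rw [hcard2] at hkey
  have hev1 : (derivative^[k] P).eval (z.re : ℂ) = (((derivative^[k] p).eval z.re : ℝ) : ℂ) := by
    rw [hPdef, iterate_derivative_map, eval_map]
    rw [← aeval_def, ← Complex.coe_algebraMap,
      aeval_algebraMap_apply_eq_algebraMap_eval]
  have hev2 : P.eval z = aeval z p := by
    rw [hPdef, eval_map, aeval_def]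
  rw [hev1, hev2, Complex.norm_real, Real.norm_eq_abs] at hkey
  exact hkey

/-- If a sequence of real-rooted real polynomials of degree at most `n` converges
coefficient-wise to a polynomial `q` (of degree at most `n`), then `q` is real-rooted. -/
theorem stmt5 (n : ℕ) (p : ℕ → Polynomial ℝ) (hdeg : ∀ i, (p i).degree ≤ (n : WithBot ℕ))
    (hrr : ∀ i, RealRooted (p i)) (q : Polynomial ℝ) (hq : q.degree ≤ (n : WithBot ℕ))
    (hconv : ∀ k ≤ n,
      Filter.Tendsto (fun i => (p i).coeff k) Filter.atTop (nhds (q.coeff k))) :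
    RealRooted q := by
  by_cases hq0 : q = 0
  · exact Or.inl hq0
  right
  intro z hz
  by_contra him
  have hnd : ∀ i, (p i).natDegree ≤ n := fun i => natDegree_le_iff_degree_le.mpr (hdeg i)
  have hqnd : q.natDegree ≤ n := natDegree_le_iff_degree_le.mpr hq
  set d := q.natDegree with hd
  have hconv' : ∀ k, Filter.Tendsto (fun i => (p i).coeff k) Filter.atTop (nhds (q.coeff k)) := by
    intro k
    by_cases hk : k ≤ n
    · exact hconv k hk
    · have hklt : (n : WithBot ℕ) < (k : WithBot ℕ) := by
        exact_mod_cast Nat.lt_of_not_le hk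
      have hqk : q.coeff k = 0 := coeff_eq_zero_of_degree_lt (lt_of_le_of_lt hq hklt)
      have hpk : ∀ i, (p i).coeff k = 0 := fun i =>
        coeff_eq_zero_of_degree_lt (lt_of_le_of_lt (hdeg i) hklt)
      simp only [hpk, hqk]
      exact tendsto_const_nhds
  have hL : (derivative^[d] q).eval z.re ≠ 0 := by
    have h1 : (derivative^[d] q).natDegree ≤ 0 :=
      (natDegree_iterate_derivative q d).trans (le_of_eq (Nat.sub_self _))
    rw [eq_C_of_natDegree_le_zero h1, eval_C, coeff_iterate_derivative]
    simp only [zero_add, Nat.descFactorial_self, nsmul_eq_mul]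
    refine mul_ne_zero (by positivity) ?_
    rw [hd, coeff_natDegree]
    exact leadingCoeff_ne_zero.mpr hq0
  have hevconv : Filter.Tendsto (fun i => (derivative^[d] (p i)).eval z.re)
      Filter.atTop (nhds ((derivative^[d] q).eval z.re)) := by
    have hrew : ∀ w : ℝ[X], w.natDegree ≤ n → (derivative^[d] w).eval z.re
        = ∑ j ∈ Finset.range (n+1),
            ((j+d).descFactorial d : ℝ) * w.coeff (j+d) * z.re ^ j := by
      intro w hw
      rw [eval_eq_sum_range' (lt_of_le_of_lt
        ((natDegree_iterate_derivative w d).trans ((Nat.sub_le _ _).trans hw))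
        (Nat.lt_succ_self n))]
      refine Finset.sum_congr rfl fun j _ => ?_
      rw [coeff_iterate_derivative]
      simp [nsmul_eq_mul]
    have e1 : (fun i => (derivative^[d] (p i)).eval z.re) = fun i =>
        ∑ j ∈ Finset.range (n+1),
          ((j+d).descFactorial d : ℝ) * (p i).coeff (j+d) * z.re ^ j :=
      funext fun i => hrew (p i) (hnd i)
    rw [e1, hrew q hqnd]
    apply tendsto_finset_sum
    intro j _
    exact ((hconv' (j+d)).const_mul _).mul_const _
  have haev : ∀ w : ℝ[X], w.natDegree ≤ n →
      (aeval z w : ℂ) = ∑ j ∈ Finset.range (n+1), w.coeff j • z ^ j :=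
    fun w hw => aeval_eq_sum_range' (Nat.lt_succ_of_le hw) z
  have hA : Filter.Tendsto (fun i => (aeval z (p i) : ℂ)) Filter.atTop (nhds (aeval z q)) := by
    have e1 : (fun i => (aeval z (p i) : ℂ)) = fun i =>
        ∑ j ∈ Finset.range (n+1), (p i).coeff j • z ^ j :=
      funext fun i => haev (p i) (hnd i)
    rw [e1, haev q hqnd]
    apply tendsto_finset_sum
    intro j _
    exact (hconv' j).smul_const _
  have hA0 : Filter.Tendsto (fun i => ‖aeval z (p i)‖) Filter.atTop (nhds 0) := by
    have h2 := (continuous_norm.tendsto _).comp hA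
    rw [hz] at h2
    simpa [Function.comp_def] using h2
  have hineq : ∀ i, |z.im| ^ d * |(derivative^[d] (p i)).eval z.re|
      ≤ (d ! : ℝ) * (n.choose d : ℝ) * ‖aeval z (p i)‖ := by
    intro i
    refine (key2 (p i) (hrr i) z d).trans ?_
    have hch : (((p i).natDegree.choose d : ℕ) : ℝ) ≤ ((n.choose d : ℕ) : ℝ) := by
      exact_mod_cast Nat.choose_le_choose d (hnd i)
    have h0 : (0:ℝ) ≤ ‖aeval z (p i)‖ := by positivity
    apply mul_le_mul_of_nonneg_right _ h0
    exact mul_le_mul_of_nonneg_left hch (by positivity)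
  have hBL : Filter.Tendsto (fun i => |z.im| ^ d * |(derivative^[d] (p i)).eval z.re|)
      Filter.atTop (nhds (|z.im| ^ d * |(derivative^[d] q).eval z.re|)) :=
    ((continuous_abs.tendsto _).comp hevconv).const_mul _
  have hR0 : Filter.Tendsto (fun i => (d ! : ℝ) * (n.choose d : ℝ) * ‖aeval z (p i)‖)
      Filter.atTop (nhds 0) := by
    have := hA0.const_mul ((d ! : ℝ) * (n.choose d : ℝ))
    simpa using this
  have hfinal : |z.im| ^ d * |(derivative^[d] q).eval z.re| ≤ 0 :=
    le_of_tendsto_of_tendsto' hBL hR0 hineq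
  have h1 : 0 < |z.im| := abs_pos.mpr him
  have h2 : 0 < |(derivative^[d] q).eval z.re| := abs_pos.mpr hL
  have : 0 < |z.im| ^ d * |(derivative^[d] q).eval z.re| := mul_pos (pow_pos h1 d) h2
  linarith
end

section
/- Let p_γ(x) = Σ_{k=0}^{n} (−1)^k x^{n−k} c_k(γ) where c₀,…,cₙ ∈ ℝ[γ] have degree at most d and c₀ is not identically zero. For each k ≥ 0, there exists a polynomial r_k ∈ ℝ[γ] of degree at most dk such that for every γ with c₀(γ) ≠ 0, the k-th power sum m_k(γ) of the complex roots of p_γ equals r_k(γ)/c₀(γ)^k. -/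
open Polynomial Finset

private lemma psum_multiset (s : Multiset ℂ) {k : ℕ} (h : 0 < k) :
    (s.map (· ^ k)).sum =
      (-1 : ℂ) ^ (k + 1) * k * s.esymm k -
        ∑ a ∈ (Finset.HasAntidiagonal.antidiagonal k).filter (fun a => a.1 ∈ Set.Ioo 0 k),
          (-1 : ℂ) ^ a.1 * s.esymm a.1 * (s.map (· ^ a.2)).sum := by
  classical
  have hs : (Finset.univ.val.map s.toList.get) = s := by
    rw [Fin.univ_val_map, List.ofFn_get, Multiset.coe_toList]
  have hpsum : ∀ m : ℕ, (MvPolynomial.aeval s.toList.get)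
      (MvPolynomial.psum (Fin s.toList.length) ℂ m) = (s.map (· ^ m)).sum := by
    intro m
    rw [MvPolynomial.psum, map_sum]
    simp only [map_pow, MvPolynomial.aeval_X]
    conv_rhs => rw [← hs, Multiset.map_map]
    rfl
  have hesymm : ∀ m : ℕ, (MvPolynomial.aeval s.toList.get)
      (MvPolynomial.esymm (Fin s.toList.length) ℂ m) = s.esymm m := by
    intro m
    rw [MvPolynomial.aeval_esymm_eq_multiset_esymm, hs]
  have H := congrArg (MvPolynomial.aeval s.toList.get)
    (MvPolynomial.psum_eq_mul_esymm_sub_sum (Fin s.toList.length) ℂ k h)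
  simp only [map_sum, map_sub, map_mul, map_pow, map_neg, map_one, map_natCast, hpsum, hesymm] at H
  simpa using H

private noncomputable def rp (n : ℕ) (c : ℕ → Polynomial ℝ) : ℕ → Polynomial ℝ
  | 0 => Polynomial.C (n : ℝ)
  | (k+1) =>
      Polynomial.C ((-1 : ℝ) ^ (k + 2) * ((k + 1 : ℕ) : ℝ)) *
          (if k + 1 ≤ n then c (k + 1) else 0) * (c 0) ^ k -
        ∑ a ∈ ((Finset.HasAntidiagonal.antidiagonal (k+1)).filter (fun a => a.1 ∈ Set.Ioo 0 (k+1))).attach,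
          Polynomial.C ((-1 : ℝ) ^ (a.1).1) * (if (a.1).1 ≤ n then c (a.1).1 else 0) *
            (c 0) ^ ((a.1).1 - 1) * rp n c (a.1).2
  decreasing_by
    have h := a.2
    simp only [Finset.mem_filter, Finset.HasAntidiagonal.mem_antidiagonal, Set.mem_Ioo] at h
    omega

private lemma rp_eval (n : ℕ) (c : ℕ → Polynomial ℝ) (γ : ℝ) (hγ : (c 0).eval γ ≠ 0) (k : ℕ) :
    (((∑ j ∈ Finset.range (n + 1),
          Polynomial.C ((-1 : ℝ) ^ j * (c j).eval γ) * Polynomial.X ^ (n - j)).map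
        (algebraMap ℝ ℂ)).roots.map (fun z => z ^ k)).sum
      = (((rp n c k).eval γ / ((c 0).eval γ) ^ k : ℝ) : ℂ) := by

  classical
  set q : Polynomial ℝ := ∑ j ∈ Finset.range (n + 1),
      Polynomial.C ((-1 : ℝ) ^ j * (c j).eval γ) * Polynomial.X ^ (n - j) with hq
  set P : Polynomial ℂ := q.map (algebraMap ℝ ℂ) with hP
  -- coefficients of q
  have hqcoeff : ∀ j ≤ n, q.coeff (n - j) = (-1 : ℝ) ^ j * (c j).eval γ := by
    intro j hj
    rw [hq, finset_sum_coeff]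
    rw [Finset.sum_eq_single j]
    · rw [coeff_C_mul, coeff_X_pow, if_pos rfl, mul_one]
    · intro b hb hbj
      simp only [coeff_C_mul, coeff_X_pow, Finset.mem_range] at hb ⊢
      rw [if_neg (by omega), mul_zero]
    · intro hj'
      exact absurd (Finset.mem_range.2 (by omega)) hj'
  have hqdeg : q.degree ≤ (n : WithBot ℕ) := by
    rw [hq]
    refine (degree_sum_le _ _).trans (Finset.sup_le fun j hj => ?_)
    refine (degree_mul_le _ _).trans ?_
    calc (C ((-1 : ℝ) ^ j * (c j).eval γ)).degree + (X ^ (n - j) : Polynomial ℝ).degree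
        ≤ 0 + ((n - j : ℕ) : WithBot ℕ) := by gcongr; exacts [degree_C_le, degree_X_pow_le _]
      _ ≤ (n : WithBot ℕ) := by rw [zero_add]; exact Nat.cast_le.2 (Nat.sub_le n j)
  -- facts about P
  have hPcoeff : ∀ j ≤ n, P.coeff (n - j) = (((-1 : ℝ) ^ j * (c j).eval γ : ℝ) : ℂ) := by
    intro j hj
    rw [hP, coeff_map, hqcoeff j hj]
    rfl
  have hPdeg : P.degree ≤ (n : WithBot ℕ) :=
    le_trans (degree_map_le) hqdeg
  have hPn : P.coeff n ≠ 0 := by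
    have := hPcoeff 0 (Nat.zero_le n)
    simp only [Nat.sub_zero, pow_zero, one_mul] at this
    rw [this]
    exact_mod_cast hγ
  have hPnatDeg : P.natDegree = n :=
    le_antisymm (natDegree_le_iff_degree_le.2 hPdeg) (le_natDegree_of_ne_zero hPn)
  have hPne : P ≠ 0 := fun h => hPn (by simp [h])
  have hlead : P.leadingCoeff = (((c 0).eval γ : ℝ) : ℂ) := by
    rw [leadingCoeff, hPnatDeg]
    have := hPcoeff 0 (Nat.zero_le n)
    simpa using this
  have hcard : Multiset.card P.roots = n := by
    rw [← hPnatDeg]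
    exact splits_iff_card_roots.1 (IsAlgClosed.splits P)
  have hesymm : ∀ j ≤ n, P.roots.esymm j
      = (((c j).eval γ / (c 0).eval γ : ℝ) : ℂ) := by
    intro j hj
    have hco := Polynomial.coeff_eq_esymm_roots_of_card
      (by rw [hcard, hPnatDeg]) (k := n - j) (by rw [hPnatDeg]; omega)
    rw [hPnatDeg] at hco
    have hnj : n - (n - j) = j := by omega
    rw [hnj, hPcoeff j hj, hlead] at hco
    have hne : (((c 0).eval γ : ℝ) : ℂ) ≠ 0 := by exact_mod_cast hγ
    have hpow : ((-1 : ℂ)) ^ j ≠ 0 := pow_ne_zero _ (by norm_num)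
    have hco' : (((c j).eval γ : ℝ) : ℂ) = (((c 0).eval γ : ℝ) : ℂ) * P.roots.esymm j := by
      apply mul_left_cancel₀ hpow
      push_cast at hco
      linear_combination hco
    push_cast
    field_simp
    rw [hco']; ring
  have hesymm' : ∀ j, n < j → P.roots.esymm j = 0 := by
    intro j hj
    rw [Multiset.esymm, Multiset.powersetCard_eq_empty _ (by rw [hcard]; omega)]
    simp
  have hesymmA : ∀ j, 0 < j → P.roots.esymm j
      = (((if j ≤ n then (c j).eval γ else 0) / (c 0).eval γ : ℝ) : ℂ) := by
    intro j hj
    by_cases hjn : j ≤ n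
    · rw [if_pos hjn]; exact hesymm j hjn
    · rw [if_neg hjn, hesymm' j (by omega)]
      simp
  induction k using Nat.strong_induction_on with
  | _ k ih =>
    match k with
    | 0 =>
      simp only [pow_zero]
      rw [Multiset.map_const', Multiset.sum_replicate, hcard, rp]
      simp
    | (k+1) =>
      rw [psum_multiset P.roots (Nat.succ_pos k)]
      rw [hesymmA (k+1) (Nat.succ_pos k)]
      rw [Finset.sum_congr rfl (fun a ha => by
        have hmem := ha
        simp only [Finset.mem_filter, Finset.HasAntidiagonal.mem_antidiagonal, Set.mem_Ioo] at hmem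
        rw [hesymmA a.1 hmem.2.1, ih a.2 (by omega)])]
      rw [rp, eval_sub, eval_mul, eval_mul, eval_pow, eval_C, eval_finset_sum,
        Finset.sum_attach ((Finset.HasAntidiagonal.antidiagonal (k+1)).filter (fun a => a.1 ∈ Set.Ioo 0 (k+1)))
          (fun b : ℕ × ℕ => (Polynomial.C ((-1 : ℝ) ^ b.1) * (if b.1 ≤ n then c b.1 else 0) *
            (c 0) ^ (b.1 - 1) * rp n c b.2).eval γ)]
      push_cast
      rw [sub_div, Finset.sum_div]
      congr 1
      · have hc : (((c 0).eval γ : ℝ) : ℂ) ≠ 0 := by exact_mod_cast hγ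
        rw [apply_ite (Polynomial.eval γ), eval_zero, pow_succ]
        field_simp
        ring
      · refine Finset.sum_congr rfl fun a ha => ?_
        simp only [Finset.mem_filter, Finset.HasAntidiagonal.mem_antidiagonal, Set.mem_Ioo] at ha
        have hc : (((c 0).eval γ : ℝ) : ℂ) ≠ 0 := by exact_mod_cast hγ
        simp only [eval_mul, eval_pow, eval_C, apply_ite (Polynomial.eval γ), eval_zero]
        push_cast
        rw [show k + 1 = (a.1 - 1) + 1 + a.2 by omega, pow_add, pow_add, pow_one]
        field_simp

private lemma rp_degree (n d : ℕ) (c : ℕ → Polynomial ℝ)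
    (hd : ∀ k ≤ n, (c k).degree ≤ (d : WithBot ℕ)) :
    ∀ k, (rp n c k).degree ≤ ((d * k : ℕ) : WithBot ℕ) := by
  intro k
  induction k using Nat.strong_induction_on with
  | _ k ih =>
    have hcif : ∀ j : ℕ, ((if j ≤ n then c j else 0) : Polynomial ℝ).degree ≤ (d : WithBot ℕ) := by
      intro j
      split_ifs with hj
      · exact hd j hj
      · simp
    match k with
    | 0 =>
      rw [rp]
      exact (degree_C_le).trans (by simp)
    | (k+1) =>
      rw [rp]
      refine (degree_sub_le _ _).trans (max_le ?_ ?_)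
      · refine (degree_mul_le _ _).trans ?_
        calc (Polynomial.C ((-1 : ℝ) ^ (k + 2) * ((k + 1 : ℕ) : ℝ)) *
                (if k + 1 ≤ n then c (k + 1) else 0)).degree + ((c 0) ^ k).degree
            ≤ (0 + (d : WithBot ℕ)) + ((d * k : ℕ) : WithBot ℕ) := by
              gcongr
              · exact (degree_mul_le _ _).trans (add_le_add degree_C_le (hcif _))
              · exact (degree_pow_le _ _).trans (by
                  calc k • (c 0).degree ≤ k • (d : WithBot ℕ) := nsmul_le_nsmul_right (hd 0 (by omega)) k
                    _ = ((d * k : ℕ) : WithBot ℕ) := by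
                      rw [nsmul_eq_mul]
                      push_cast
                      ring)
          _ ≤ ((d * (k + 1) : ℕ) : WithBot ℕ) := by
              rw [zero_add, ← Nat.cast_add]
              exact Nat.cast_le.2 (le_of_eq (by ring))
      · refine (degree_sum_le _ _).trans ?_
        refine Finset.sup_le fun a _ => ?_
        obtain ⟨⟨a1, a2⟩, ha⟩ := a
        simp only [Finset.mem_filter, Finset.HasAntidiagonal.mem_antidiagonal, Set.mem_Ioo] at ha
        have h2 : a2 < k + 1 := by omega
        refine (degree_mul_le _ _).trans ?_
        calc (Polynomial.C ((-1 : ℝ) ^ a1) * (if a1 ≤ n then c a1 else 0) *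
                (c 0) ^ (a1 - 1)).degree + (rp n c a2).degree
            ≤ ((0 + (d : WithBot ℕ)) + ((d * (a1 - 1) : ℕ) : WithBot ℕ)) + ((d * a2 : ℕ) : WithBot ℕ) := by
              gcongr
              · refine (degree_mul_le _ _).trans ?_
                gcongr
                · exact (degree_mul_le _ _).trans (add_le_add degree_C_le (hcif _))
                · exact (degree_pow_le _ _).trans (by
                    calc (a1-1) • (c 0).degree ≤ (a1-1) • (d : WithBot ℕ) :=
                        nsmul_le_nsmul_right (hd 0 (by omega)) _
                      _ = ((d * (a1 - 1) : ℕ) : WithBot ℕ) := by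
                        rw [nsmul_eq_mul]; push_cast; ring)
              · exact ih a2 h2
          _ ≤ ((d * (k + 1) : ℕ) : WithBot ℕ) := by
              rw [zero_add, ← Nat.cast_add, ← Nat.cast_add]
              refine Nat.cast_le.2 ?_
              have : d + d * (a1 - 1) + d * a2 = d * (1 + (a1 - 1) + a2) := by ring
              rw [this]
              exact Nat.mul_le_mul_left d (by omega)

/-- For the one-parameter family `p_γ(x) = Σ_{k=0}^n (−1)^k x^{n−k} c_k(γ)` with
`c_k ∈ ℝ_d[γ]` and `c₀` not identically zero, the `k`-th power sum of the complex roots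
of `p_γ` equals `r_k(γ) / c₀(γ)^k` for a polynomial `r_k` of degree at most `d·k`,
whenever `c₀(γ) ≠ 0`. -/
theorem stmt7 (n d : ℕ) (c : ℕ → Polynomial ℝ) (hd : ∀ k ≤ n, (c k).degree ≤ (d : WithBot ℕ))
    (hc0 : c 0 ≠ 0) (k : ℕ) :
    ∃ r : Polynomial ℝ, r.degree ≤ ((d * k : ℕ) : WithBot ℕ) ∧
      ∀ γ : ℝ, (c 0).eval γ ≠ 0 →
        (((∑ j ∈ Finset.range (n + 1),
              Polynomial.C ((-1 : ℝ) ^ j * (c j).eval γ) * Polynomial.X ^ (n - j)).map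
            (algebraMap ℝ ℂ)).roots.map (fun z => z ^ k)).sum
          = ((r.eval γ / ((c 0).eval γ) ^ k : ℝ) : ℂ) :=
  ⟨rp n c k, rp_degree n d c hd k, fun γ hγ => rp_eval n c γ hγ k⟩
end

section
/- Let p be a real univariate polynomial of degree n with nonzero leading coefficient, with complex roots x₁,…,xₙ (with multiplicity), and let m_j = Σᵢ xᵢ^j (which are real numbers). Then p is real-rooted if and only if the n×n Hankel moment matrix M with entries M_{k,l} = m_{k+l−2} (1 ≤ k,l ≤ n) is positive semidefinite. -/
open Polynomial Finset Matrix

private lemma qform_eq (n : ℕ) (m : ℕ → ℝ) (a : Fin n → ℝ) :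
    dotProduct (star a) ((Matrix.of fun k l : Fin n => m ((k : ℕ) + (l : ℕ))) *ᵥ a)
      = ∑ k : Fin n, ∑ l : Fin n, a k * a l * m ((k : ℕ) + (l : ℕ)) := by
  simp only [star_trivial, dotProduct, Matrix.mulVec, Matrix.of_apply, Finset.mul_sum]
  exact Finset.sum_congr rfl fun k _ => Finset.sum_congr rfl fun l _ => by ring

private lemma sum_sq_eq (n : ℕ) (x : Fin n → ℂ) (m : ℕ → ℝ)
    (hm : ∀ j, ((m j : ℂ)) = ∑ i, x i ^ j) (a : Fin n → ℝ) :
    ((∑ k : Fin n, ∑ l : Fin n, a k * a l * m ((k : ℕ) + (l : ℕ)) : ℝ) : ℂ)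
      = ∑ i, (∑ k : Fin n, (a k : ℂ) * x i ^ (k : ℕ)) ^ 2 := by
  push_cast
  calc ∑ k : Fin n, ∑ l : Fin n, (a k : ℂ) * (a l : ℂ) * ((m ((k : ℕ) + (l : ℕ)) : ℝ) : ℂ)
      = ∑ k : Fin n, ∑ l : Fin n, ∑ i, (a k : ℂ) * (a l : ℂ) * x i ^ ((k : ℕ) + (l : ℕ)) := by
        refine Finset.sum_congr rfl fun k _ => Finset.sum_congr rfl fun l _ => ?_
        rw [hm, Finset.mul_sum]
    _ = ∑ i, ∑ k : Fin n, ∑ l : Fin n, (a k : ℂ) * (a l : ℂ) * x i ^ ((k : ℕ) + (l : ℕ)) := by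
        calc ∑ k : Fin n, ∑ l : Fin n, ∑ i, (a k : ℂ) * (a l : ℂ) * x i ^ ((k : ℕ) + (l : ℕ))
            = ∑ k : Fin n, ∑ i, ∑ l : Fin n, (a k : ℂ) * (a l : ℂ) * x i ^ ((k : ℕ) + (l : ℕ)) :=
              Finset.sum_congr rfl fun k _ => Finset.sum_comm
          _ = ∑ i, ∑ k : Fin n, ∑ l : Fin n, (a k : ℂ) * (a l : ℂ) * x i ^ ((k : ℕ) + (l : ℕ)) :=
              Finset.sum_comm
    _ = ∑ i, (∑ k : Fin n, (a k : ℂ) * x i ^ (k : ℕ)) ^ 2 := by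
        refine Finset.sum_congr rfl fun i _ => ?_
        rw [sq, Finset.sum_mul_sum]
        exact Finset.sum_congr rfl fun k _ => Finset.sum_congr rfl fun l _ => by
          rw [pow_add]; ring

private lemma roots_prod_eq (n : ℕ) (f : Fin n → ℂ) :
    (∏ i, (X - C (f i))).roots = Multiset.map f Finset.univ.val := by
  have h1 : (∏ i, (X - C (f i)))
      = ((Multiset.map f Finset.univ.val).map fun a => X - C a).prod := by
    rw [Multiset.map_map]
    rfl
  rw [h1, Polynomial.roots_multiset_prod_X_sub_C]

/-- (Sylvester) A real polynomial of degree `n` with nonzero leading coefficient, complex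
roots `x₁, …, xₙ` (with multiplicity) and real power sums `m_j = Σᵢ xᵢ^j`, is real-rooted
iff the `n × n` Hankel moment matrix `(m_{k+l-2})_{k,l}` is positive semidefinite. -/
theorem stmt8 (n : ℕ) (p : Polynomial ℝ) (hdeg : p.natDegree = n) (hp : p ≠ 0)
    (x : Fin n → ℂ)
    (hroots : p.map (algebraMap ℝ ℂ) =
      Polynomial.C ((p.leadingCoeff : ℂ)) * ∏ i, (Polynomial.X - Polynomial.C (x i)))
    (m : ℕ → ℝ) (hm : ∀ j, ((m j : ℂ)) = ∑ i, x i ^ j) :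
    (∀ i, (x i).im = 0) ↔
      (Matrix.of fun k l : Fin n => m ((k : ℕ) + (l : ℕ))).PosSemidef := by
  classical
  have herm : (Matrix.of fun k l : Fin n => m ((k : ℕ) + (l : ℕ))).IsHermitian := by
    show _ᴴ = _
    ext k l
    simp [Matrix.conjTranspose_apply, Nat.add_comm]
  constructor
  · intro hreal
    refine Matrix.PosSemidef.of_dotProduct_mulVec_nonneg herm fun a => ?_
    have hx : ∀ i, x i = ((x i).re : ℂ) := fun i =>
      Complex.ext (by simp) (by simp [hreal i])
    have h1 := sum_sq_eq n x m hm a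
    have h2 : (((∑ k : Fin n, ∑ l : Fin n, a k * a l * m ((k : ℕ) + (l : ℕ)) : ℝ)) : ℂ)
        = ((∑ i, (∑ k : Fin n, a k * (x i).re ^ (k : ℕ)) ^ 2 : ℝ) : ℂ) := by
      rw [h1]
      push_cast
      refine Finset.sum_congr rfl fun i _ => ?_
      congr 1
      exact Finset.sum_congr rfl fun k _ => by rw [← hx i]
    rw [qform_eq]
    rw [Complex.ofReal_inj.mp h2]
    exact Finset.sum_nonneg fun i _ => sq_nonneg _
  · intro hpsd
    by_contra hcon
    push_neg at hcon
    obtain ⟨i₀, him⟩ := hcon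
    -- the multiset of roots is closed under conjugation
    have hlcne : (↑p.leadingCoeff : ℂ) ≠ 0 := by
      simpa using Polynomial.leadingCoeff_ne_zero.mpr hp
    have hcomp : (starRingEnd ℂ).comp (algebraMap ℝ ℂ) = algebraMap ℝ ℂ :=
      RingHom.ext fun r => Complex.conj_ofReal r
    have hmapself : (p.map (algebraMap ℝ ℂ)).map (starRingEnd ℂ) = p.map (algebraMap ℝ ℂ) := by
      rw [Polynomial.map_map, hcomp]
    have h2 : Polynomial.C ((p.leadingCoeff : ℂ)) * ∏ i, (X - C ((starRingEnd ℂ) (x i)))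
        = Polynomial.C ((p.leadingCoeff : ℂ)) * ∏ i, (X - C (x i)) := by
      have h := congrArg (Polynomial.map (starRingEnd ℂ)) hroots
      rw [hmapself, hroots] at h
      rw [Polynomial.map_mul, Polynomial.map_C, Polynomial.map_prod] at h
      simp only [Polynomial.map_sub, Polynomial.map_X, Polynomial.map_C,
        Complex.conj_ofReal] at h
      exact h.symm
    have h3 : (∏ i, (X - C ((starRingEnd ℂ) (x i)))) = ∏ i, (X - C (x i)) :=
      mul_left_cancel₀ (by simpa using hlcne : (Polynomial.C ((p.leadingCoeff : ℂ))) ≠ 0) h2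
    have h4 : Multiset.map (fun i => (starRingEnd ℂ) (x i)) Finset.univ.val
        = Multiset.map x Finset.univ.val := by
      rw [← roots_prod_eq n x, ← roots_prod_eq n (fun i => (starRingEnd ℂ) (x i)), h3]
    set s : Multiset ℂ := Multiset.map x Finset.univ.val with hs
    have hmem : ∀ w, w ∈ s → (starRingEnd ℂ) w ∈ s := by
      intro w hw
      have : w ∈ Multiset.map (fun i => (starRingEnd ℂ) (x i)) Finset.univ.val := by rw [h4]; exact hw
      obtain ⟨i, hi, hiw⟩ := Multiset.mem_map.mp this
      have : (starRingEnd ℂ) w = x i := by rw [← hiw]; simp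
      rw [this]
      exact Multiset.mem_map_of_mem _ hi
    set z := x i₀ with hz
    have hzmem : z ∈ s := Multiset.mem_map_of_mem _ (Finset.mem_univ_val i₀)
    have hzbar : z ≠ (starRingEnd ℂ) z := by
      intro h
      exact him (Complex.conj_eq_iff_im.mp h.symm)
    set T : Finset ℂ := s.toFinset \ {z, (starRingEnd ℂ) z} with hT
    have hTne : ∀ w ∈ T, w ≠ z ∧ w ≠ (starRingEnd ℂ) z := by
      intro w hw
      have := (Finset.mem_sdiff.mp hw).2
      simp only [Finset.mem_insert, Finset.mem_singleton] at this
      push_neg at this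
      exact this
    have hTconj : ∀ w ∈ T, (starRingEnd ℂ) w ∈ T := by
      intro w hw
      obtain ⟨hw1, hw2⟩ := Finset.mem_sdiff.mp hw
      refine Finset.mem_sdiff.mpr ⟨?_, ?_⟩
      · exact Multiset.mem_toFinset.mpr (hmem w (Multiset.mem_toFinset.mp hw1))
      · simp only [Finset.mem_insert, Finset.mem_singleton] at hw2 ⊢
        push_neg at hw2 ⊢
        constructor
        · intro h; exact hw2.2 (by rw [← h]; simp)
        · intro h
          exact hw2.1 (by simpa using congrArg (starRingEnd ℂ) h)
    have hcard : T.card + 2 ≤ n := by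
      have hsub : ({z, (starRingEnd ℂ) z} : Finset ℂ) ⊆ s.toFinset := by
        intro w hw
        simp only [Finset.mem_insert, Finset.mem_singleton] at hw
        rcases hw with h | h <;> subst h
        · exact Multiset.mem_toFinset.mpr hzmem
        · exact Multiset.mem_toFinset.mpr (hmem z hzmem)
      have hc2 : ({z, (starRingEnd ℂ) z} : Finset ℂ).card = 2 := by
        rw [Finset.card_insert_of_notMem (by simpa using hzbar), Finset.card_singleton]
      have h5 : T.card = s.toFinset.card - 2 := by rw [Finset.card_sdiff_of_subset hsub, hc2]
      have h6 : s.toFinset.card ≤ n := by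
        calc s.toFinset.card ≤ Multiset.card s := Multiset.toFinset_card_le s
        _ = n := by simp [hs]
      have h7 : 2 ≤ s.toFinset.card := by
        calc 2 = ({z, (starRingEnd ℂ) z} : Finset ℂ).card := hc2.symm
        _ ≤ s.toFinset.card := Finset.card_le_card hsub
      omega
    -- build the polynomial
    set R : Polynomial ℂ := ∏ w ∈ T, (X - C w) with hR
    have hRz : R.eval z ≠ 0 := by
      rw [hR, Polynomial.eval_prod]
      refine Finset.prod_ne_zero_iff.mpr fun w hw => ?_
      simp only [Polynomial.eval_sub, Polynomial.eval_X, Polynomial.eval_C, sub_ne_zero]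
      exact fun h => (hTne w hw).1 (by rw [h])
    set v : ℂ := Complex.I / R.eval z with hv
    set β : ℝ := v.im / z.im with hβ
    set α : ℝ := v.re - β * z.re with hα
    set L : Polynomial ℂ := C (α : ℂ) + C (β : ℂ) * X with hL
    have hLz : L.eval z = v := by
      simp only [hL, Polynomial.eval_add, Polynomial.eval_mul, Polynomial.eval_C,
        Polynomial.eval_X]
      apply Complex.ext
      · simp [Complex.add_re, Complex.mul_re, hα]
      · simp only [Complex.add_im, Complex.ofReal_im, Complex.mul_im, Complex.ofReal_re,
          zero_add, zero_mul, add_zero]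
        rw [hβ]
        field_simp
    set q : Polynomial ℂ := L * R with hq
    have hqz : q.eval z = Complex.I := by
      rw [hq, Polynomial.eval_mul, hLz, hv, div_mul_cancel₀ _ hRz]
    have hqT : ∀ w ∈ T, q.eval w = 0 := by
      intro w hw
      rw [hq, Polynomial.eval_mul, hR, Polynomial.eval_prod]
      rw [Finset.prod_eq_zero hw (by simp)]
      ring
    have hmapq : q.map (starRingEnd ℂ) = q := by
      rw [hq, Polynomial.map_mul]
      have hmL : L.map (starRingEnd ℂ) = L := by
        simp [hL, Polynomial.map_add, Polynomial.map_mul, Polynomial.map_C,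
          Complex.conj_ofReal]
      have hmR : R.map (starRingEnd ℂ) = R := by
        rw [hR, Polynomial.map_prod]
        simp only [Polynomial.map_sub, Polynomial.map_X, Polynomial.map_C]
        have himg : T.image (fun w => (starRingEnd ℂ) w) = T := by
          apply Finset.ext
          intro u
          constructor
          · intro hu
            obtain ⟨w, hw, hwu⟩ := Finset.mem_image.mp hu
            rw [← hwu]
            exact hTconj w hw
          · intro hu
            refine Finset.mem_image.mpr ⟨(starRingEnd ℂ) u, hTconj u hu, by simp⟩
        calc ∏ w ∈ T, (X - C ((starRingEnd ℂ) w))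
            = ∏ u ∈ T.image (fun w => (starRingEnd ℂ) w), (X - C u) :=
              (Finset.prod_image (f := fun u => (X : Polynomial ℂ) - C u)
                (fun a _ b _ h => by simpa using congrArg (starRingEnd ℂ) h)).symm
          _ = ∏ w ∈ T, (X - C w) := by rw [himg]
      rw [hmL, hmR]
    have hdegq : q.natDegree < n := by
      have hdR : R.natDegree = T.card := by
        rw [hR, Polynomial.natDegree_prod _ _ (fun w _ => Polynomial.X_sub_C_ne_zero w)]
        simp
      have hdL : L.natDegree ≤ 1 := by
        refine le_trans (Polynomial.natDegree_add_le _ _) ?_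
        simp only [Polynomial.natDegree_C, max_le_iff]
        exact ⟨Nat.zero_le _, le_trans (Polynomial.natDegree_C_mul_le _ _)
          (le_of_eq Polynomial.natDegree_X)⟩
      have hmul : q.natDegree ≤ L.natDegree + R.natDegree := by
        rw [hq]; exact Polynomial.natDegree_mul_le
      omega
    set a : Fin n → ℝ := fun k => (q.coeff k).re with ha
    have hacoeff : ∀ k : ℕ, ((q.coeff k).re : ℂ) = q.coeff k := by
      intro k
      have : (starRingEnd ℂ) (q.coeff k) = q.coeff k := by
        conv_rhs => rw [← hmapq]
        rw [Polynomial.coeff_map]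
      exact Complex.conj_eq_iff_re.mp this
    have heval : ∀ w : ℂ, (∑ k : Fin n, (a k : ℂ) * w ^ (k : ℕ)) = q.eval w := by
      intro w
      rw [Polynomial.eval_eq_sum_range' hdegq, ← Fin.sum_univ_eq_sum_range
        (fun i => q.coeff i * w ^ i) n]
      exact Finset.sum_congr rfl fun k _ => by rw [ha, hacoeff]
    have hconjeval : q.eval ((starRingEnd ℂ) z) = (starRingEnd ℂ) (q.eval z) := by
      conv_lhs => rw [← hmapq]
      rw [Polynomial.eval_map, Polynomial.eval₂_hom]
    have hterm : ∀ i, (q.eval (x i)) ^ 2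
        = if x i = z ∨ x i = (starRingEnd ℂ) z then (-1 : ℂ) else 0 := by
      intro i
      by_cases h1 : x i = z
      · rw [h1, hqz, if_pos (Or.inl rfl)]
        simp [Complex.I_sq]
      · by_cases h2 : x i = (starRingEnd ℂ) z
        · rw [h2, hconjeval, hqz, if_pos (Or.inr rfl)]
          simp only [Complex.conj_I]
          ring_nf
          simp [Complex.I_sq]
        · have hxiT : x i ∈ T := by
            refine Finset.mem_sdiff.mpr ⟨Multiset.mem_toFinset.mpr
              (Multiset.mem_map_of_mem _ (Finset.mem_univ_val i)), ?_⟩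
            simp only [Finset.mem_insert, Finset.mem_singleton]
            push_neg
            exact ⟨h1, h2⟩
          rw [hqT _ hxiT, if_neg (by push_neg; exact ⟨h1, h2⟩)]
          ring
    -- conclude
    set N : ℕ := (Finset.univ.filter fun i : Fin n => x i = z ∨ x i = (starRingEnd ℂ) z).card with hN
    have hNpos : 1 ≤ N := by
      rw [hN]
      refine Finset.card_pos.mpr ⟨i₀, ?_⟩
      exact Finset.mem_filter.mpr ⟨Finset.mem_univ _, Or.inl rfl⟩
    have hsum : ((∑ k : Fin n, ∑ l : Fin n, a k * a l * m ((k : ℕ) + (l : ℕ)) : ℝ) : ℂ)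
        = -(N : ℂ) := by
      rw [sum_sq_eq n x m hm a]
      calc ∑ i, (∑ k : Fin n, (a k : ℂ) * x i ^ (k : ℕ)) ^ 2
          = ∑ i, (if x i = z ∨ x i = (starRingEnd ℂ) z then (-1 : ℂ) else 0) := by
            refine Finset.sum_congr rfl fun i _ => ?_
            rw [heval, hterm]
        _ = -(N : ℂ) := by
            rw [Finset.sum_ite, Finset.sum_const, Finset.sum_const_zero, add_zero, hN]
            simp [nsmul_eq_mul]
    have hQF : (∑ k : Fin n, ∑ l : Fin n, a k * a l * m ((k : ℕ) + (l : ℕ)) : ℝ)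
        = -(N : ℝ) := by
      apply Complex.ofReal_inj.mp
      rw [hsum]; push_cast; ring
    have := hpsd.dotProduct_mulVec_nonneg a
    rw [qform_eq, hQF] at this
    have : (N : ℝ) ≤ 0 := by linarith
    have : (1 : ℝ) ≤ (N : ℝ) := by exact_mod_cast hNpos
    linarith
end

section
/- Let p be a real univariate polynomial of degree n with leading coefficient aₙ ≠ 0 and complex roots x₁,…,xₙ (with multiplicity), and let M_p be its n×n moment matrix, M_p = V Vᵀ where V is the n×n Vandermonde matrix whose columns are (1, xᵢ, …, xᵢ^{n−1}). Then for each 1 ≤ k ≤ n, the leading principal k×k minor of M_p equals Σ_{S ⊆ {1,…,n}, |S| = k} Π_{{i,j} ⊆ S, i≠j} (xᵢ − xⱼ)², which equals aₙ^{2−2k} · sDisc_k(p). -/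
open Polynomial Finset

open Matrix Equiv


lemma detExpand {k n : ℕ} (A : Matrix (Fin k) (Fin n) ℂ) (B : Matrix (Fin n) (Fin k) ℂ) :
    (A * B).det = ∑ f : Fin k → Fin n, (∏ i, B (f i) i) * (A.submatrix id f).det := by
  have h1 : (A * B).det
      = ∑ f : Fin k → Fin n, ∑ σ : Perm (Fin k),
          (Equiv.Perm.sign σ : ℂ) * ∏ i, A (σ i) (f i) * B (f i) i := by
    simp only [det_apply', mul_apply, prod_univ_sum, mul_sum, Fintype.piFinset_univ]
    rw [Finset.sum_comm]
  rw [h1]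
  refine Finset.sum_congr rfl fun f _ => ?_
  rw [det_apply', Finset.mul_sum]
  refine Finset.sum_congr rfl fun σ _ => ?_
  simp only [submatrix_apply, id_eq]
  rw [Finset.prod_mul_distrib]
  ring

lemma perS {k n : ℕ} (A : Matrix (Fin k) (Fin n) ℂ) (S : Finset (Fin n)) (hS : S.card = k) :
    ∑ f ∈ (univ.filter (fun f : Fin k → Fin n => Function.Injective f)).filter
        (fun f => Finset.image f univ = S),
      (∏ i, Aᵀ (f i) i) * (A.submatrix id f).det
      = (A.submatrix id (S.orderEmbOfFin hS)).det ^ 2 := by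
  set e : Fin k ↪o Fin n := S.orderEmbOfFin hS with he
  have himg : Finset.image (fun i => e i) univ = S := by
    ext a
    simp only [Finset.mem_image, Finset.mem_univ, true_and]
    constructor
    · rintro ⟨i, rfl⟩; exact Finset.orderEmbOfFin_mem S hS i
    · intro haS
      have : a ∈ Set.range (S.orderEmbOfFin hS) := by
        rw [Finset.range_orderEmbOfFin]; exact haS
      obtain ⟨i, hi⟩ := this
      exact ⟨i, hi⟩
  have key : ∑ f ∈ (univ.filter (fun f : Fin k → Fin n => Function.Injective f)).filter
        (fun f => Finset.image f univ = S),
      (∏ i, Aᵀ (f i) i) * (A.submatrix id f).det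
      = ∑ σ : Perm (Fin k),
        (∏ i, Aᵀ (e (σ i)) i) * (A.submatrix id (fun i => e (σ i))).det := by
    refine (Finset.sum_bij (fun σ _ => fun i => e (σ i)) ?_ ?_ ?_ ?_).symm
    · intro σ _
      simp only [Finset.mem_filter, Finset.mem_univ, true_and]
      constructor
      · exact e.injective.comp σ.injective
      · rw [show (Finset.image (fun i => e (σ i)) univ) = Finset.image (fun i => e i) (Finset.image σ univ) by rw [Finset.image_image]; rfl]
        rw [Finset.image_univ_equiv, himg]
    · intro σ _ τ _ h
      exact Equiv.ext fun i => e.injective (congrFun h i)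
    · intro f hf
      simp only [Finset.mem_filter, Finset.mem_univ, true_and] at hf
      obtain ⟨hinj, himf⟩ := hf
      have hmem : ∀ i, f i ∈ S := fun i => by
        rw [← himf]; exact Finset.mem_image_of_mem f (Finset.mem_univ i)
      have hbij : Function.Bijective (fun i : Fin k => (⟨f i, hmem i⟩ : {a // a ∈ S})) := by
        rw [Fintype.bijective_iff_injective_and_card]
        constructor
        · intro i j hij
          exact hinj (congrArg Subtype.val hij)
        · simp [Fintype.card_coe, hS]
      let fE : Fin k ≃ {a // a ∈ S} := Equiv.ofBijective _ hbij
      refine ⟨fE.trans (S.orderIsoOfFin hS).toEquiv.symm, Finset.mem_univ _, ?_⟩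
      funext i
      show e ((S.orderIsoOfFin hS).toEquiv.symm (fE i)) = f i
      have : e ((S.orderIsoOfFin hS).toEquiv.symm (fE i)) = ↑((S.orderIsoOfFin hS) ((S.orderIsoOfFin hS).toEquiv.symm (fE i))) := (Finset.coe_orderIsoOfFin_apply S hS _).symm
      rw [this]
      simp [fE]
    · intro σ _; rfl
  rw [key]
  have hdet : ∀ σ : Perm (Fin k),
      (A.submatrix id (fun i => e (σ i))).det
        = (Equiv.Perm.sign σ : ℂ) * (A.submatrix id (fun i => e i)).det := by
    intro σ
    have : (A.submatrix id (fun i => e (σ i))) = (A.submatrix id (fun i => e i)).submatrix id σ := rfl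
    rw [this, Matrix.det_permute']
  have htr : (Aᵀ.submatrix (fun i => e i) id).det = (A.submatrix id (fun i => e i)).det := by
    rw [show Aᵀ.submatrix (fun i => e i) id = (A.submatrix id (fun i => e i))ᵀ from rfl,
      Matrix.det_transpose]
  calc ∑ σ : Perm (Fin k), (∏ i, Aᵀ (e (σ i)) i) * (A.submatrix id (fun i => e (σ i))).det
      = (∑ σ : Perm (Fin k), (Equiv.Perm.sign σ : ℂ) * ∏ i, (Aᵀ.submatrix (fun i => e i) id) (σ i) i) * (A.submatrix id (fun i => e i)).det := by
        rw [Finset.sum_mul]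
        refine Finset.sum_congr rfl fun σ _ => ?_
        rw [hdet σ]
        simp only [submatrix_apply, id_eq]
        ring
    _ = (A.submatrix id (S.orderEmbOfFin hS)).det ^ 2 := by
        rw [← det_apply', htr]; ring

lemma cauchyBinet {k n : ℕ} (A : Matrix (Fin k) (Fin n) ℂ) (G : Finset (Fin n) → ℂ)
    (hG : ∀ S (hS : S.card = k), (A.submatrix id (S.orderEmbOfFin hS)).det ^ 2 = G S) :
    (A * Aᵀ).det = ∑ S ∈ (univ : Finset (Fin n)).powersetCard k, G S := by
  rw [detExpand]
  have h2 : ∑ f : Fin k → Fin n, (∏ i, Aᵀ (f i) i) * (A.submatrix id f).det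
      = ∑ f ∈ univ.filter (fun f : Fin k → Fin n => Function.Injective f),
          (∏ i, Aᵀ (f i) i) * (A.submatrix id f).det := by
    refine (Finset.sum_subset (Finset.filter_subset _ _) fun f _ hf => ?_).symm
    simp only [Finset.mem_filter, Finset.mem_univ, true_and] at hf
    have : ∃ i j, f i = f j ∧ i ≠ j := by
      unfold Function.Injective at hf; push_neg at hf; exact hf
    obtain ⟨i, j, hfij, hij⟩ := this
    have : (A.submatrix id f).det = 0 :=
      Matrix.det_zero_of_column_eq hij (fun l => by simp [hfij])
    rw [this, mul_zero]
  rw [h2]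
  rw [← Finset.sum_fiberwise_of_maps_to (g := fun f : Fin k → Fin n => Finset.image f univ)
    (t := (univ : Finset (Fin n)).powersetCard k) ?_]
  · refine Finset.sum_congr rfl fun S hS => ?_
    have hScard : S.card = k := by
      rw [Finset.mem_powersetCard_univ] at hS; exact hS
    rw [perS A S hScard, hG S hScard]
  · intro f hf
    simp only [Finset.mem_filter, Finset.mem_univ, true_and] at hf
    rw [Finset.mem_powersetCard_univ, Finset.card_image_of_injective _ hf]
    simp

lemma vandSq {n k : ℕ} (x : Fin n → ℂ) (S : Finset (Fin n)) (hS : S.card = k) :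
    ((Matrix.of fun (i : Fin k) (j : Fin n) => x j ^ (i : ℕ)).submatrix id
        (S.orderEmbOfFin hS)).det ^ 2
      = ∏ pr ∈ (S ×ˢ S).filter (fun pr => pr.1 < pr.2), (x pr.1 - x pr.2) ^ 2 := by
  set e : Fin k ↪o Fin n := S.orderEmbOfFin hS with he
  have h1 : ((Matrix.of fun (i : Fin k) (j : Fin n) => x j ^ (i : ℕ)).submatrix id e)
      = (Matrix.vandermonde (fun j : Fin k => x (e j)))ᵀ := by
    ext i j; simp [Matrix.vandermonde]
  rw [h1, Matrix.det_transpose, Matrix.det_vandermonde]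
  have h2 : (∏ i : Fin k, ∏ j ∈ Finset.Ioi i, (x (e j) - x (e i))) ^ 2
      = ∏ i : Fin k, ∏ j ∈ Finset.Ioi i, (x (e i) - x (e j)) ^ 2 := by
    rw [← Finset.prod_pow]
    refine Finset.prod_congr rfl fun i _ => ?_
    rw [← Finset.prod_pow]
    exact Finset.prod_congr rfl fun j _ => by ring
  rw [h2]
  rw [Finset.prod_sigma' (Finset.univ : Finset (Fin k)) (fun i => Finset.Ioi i)
    (fun i j => (x (e i) - x (e j)) ^ 2)]
  refine Finset.prod_bij (fun (p : Σ _ : Fin k, Fin k) _ => ((e p.1, e p.2) : Fin n × Fin n)) ?_ ?_ ?_ ?_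
  · rintro ⟨i, j⟩ hp
    simp only [Finset.mem_sigma, Finset.mem_univ, Finset.mem_Ioi, true_and] at hp
    simp only [Finset.mem_filter, Finset.mem_product]
    exact ⟨⟨Finset.orderEmbOfFin_mem S hS i, Finset.orderEmbOfFin_mem S hS j⟩,
      e.strictMono hp⟩
  · rintro ⟨i, j⟩ hp ⟨i', j'⟩ hp' h
    simp only [Prod.mk.injEq] at h
    have h1 := e.injective h.1
    have h2 := e.injective h.2
    subst h1; subst h2; rfl
  · rintro ⟨a, b⟩ hab
    simp only [Finset.mem_filter, Finset.mem_product] at hab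
    obtain ⟨⟨haS, hbS⟩, hab'⟩ := hab
    have ha : ∃ i, e i = a := by
      have : a ∈ Set.range (S.orderEmbOfFin hS) := by
        rw [Finset.range_orderEmbOfFin]; exact haS
      exact this
    have hb : ∃ j, e j = b := by
      have : b ∈ Set.range (S.orderEmbOfFin hS) := by
        rw [Finset.range_orderEmbOfFin]; exact hbS
      exact this
    obtain ⟨i, rfl⟩ := ha
    obtain ⟨j, rfl⟩ := hb
    refine ⟨⟨i, j⟩, ?_, rfl⟩
    simp only [Finset.mem_sigma, Finset.mem_univ, Finset.mem_Ioi, true_and]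
    exact e.lt_iff_lt.mp hab'
  · rintro ⟨i, j⟩ hp; rfl



/-- The `k`-th subdiscriminant of a degree-`n` polynomial with leading coefficient `a`
and roots `x₁, …, xₙ` (with multiplicity):
`sDisc_k = a^{2k−2} Σ_{|S|=k} Π_{{i,j}⊆S} (xᵢ − xⱼ)²`. -/
noncomputable def sDisc (n : ℕ) (a : ℂ) (x : Fin n → ℂ) (k : ℕ) : ℂ :=
  a ^ (2 * k - 2) *
    ∑ S ∈ (Finset.univ : Finset (Fin n)).powersetCard k,
      ∏ pr ∈ (S ×ˢ S).filter (fun pr => pr.1 < pr.2), (x pr.1 - x pr.2) ^ 2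

/-- The moment matrix of the roots `x₁, …, xₙ`: `(M_p)_{k,l} = Σᵢ xᵢ^{k+l−2}`. -/
noncomputable def momentMatrix (n : ℕ) (x : Fin n → ℂ) : Matrix (Fin n) (Fin n) ℂ :=
  Matrix.of fun k l : Fin n => ∑ i, x i ^ ((k : ℕ) + (l : ℕ))

/-- For a real polynomial of degree `n` with nonzero leading coefficient `a` and complex
roots `x₁, …, xₙ` (with multiplicity), the leading principal `k × k` minor of the moment
matrix equals `Σ_{|S|=k} Π_{{i,j}⊆S}(xᵢ − xⱼ)²`, which equals `a^{2−2k}·sDisc_k(p)`. -/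

theorem stmt11 (n : ℕ) (p : Polynomial ℝ) (a : ℝ) (ha : a ≠ 0)
    (hdeg : p.natDegree = n) (hlead : p.leadingCoeff = a) (x : Fin n → ℂ)
    (hroots : p.map (algebraMap ℝ ℂ) =
      Polynomial.C ((a : ℂ)) * ∏ i, (Polynomial.X - Polynomial.C (x i)))
    (k : ℕ) (hk1 : 1 ≤ k) (hk : k ≤ n) :
    ((momentMatrix n x).submatrix (Fin.castLE hk) (Fin.castLE hk)).det =
        (∑ S ∈ (Finset.univ : Finset (Fin n)).powersetCard k,
          ∏ pr ∈ (S ×ˢ S).filter (fun pr => pr.1 < pr.2), (x pr.1 - x pr.2) ^ 2) ∧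
      (a : ℂ) ^ (2 * k - 2) *
          ((momentMatrix n x).submatrix (Fin.castLE hk) (Fin.castLE hk)).det =
        sDisc n (a : ℂ) x k := by
  set V : Matrix (Fin k) (Fin n) ℂ := Matrix.of fun (i : Fin k) (j : Fin n) => x j ^ (i : ℕ)
    with hV
  have hM : (momentMatrix n x).submatrix (Fin.castLE hk) (Fin.castLE hk) = V * Vᵀ := by
    ext i j
    simp only [Matrix.submatrix_apply, momentMatrix, Matrix.of_apply, Matrix.mul_apply,
      Matrix.transpose_apply, hV, Fin.coe_castLE]
    exact Finset.sum_congr rfl fun l _ => pow_add (x l) i j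
  have hmain : ((momentMatrix n x).submatrix (Fin.castLE hk) (Fin.castLE hk)).det =
      ∑ S ∈ (Finset.univ : Finset (Fin n)).powersetCard k,
        ∏ pr ∈ (S ×ˢ S).filter (fun pr => pr.1 < pr.2), (x pr.1 - x pr.2) ^ 2 := by
    rw [hM]
    exact cauchyBinet V _ (fun S hS => vandSq x S hS)
  exact ⟨hmain, by rw [hmain]; rfl⟩
end

section
/- Let p be a real univariate polynomial of degree n with nonzero leading coefficient having exactly k distinct complex roots, and let M_p be its n×n moment matrix with entries (M_p)_{i,j} = Σ_l x_l^{i+j−2}, where x₁,…,xₙ are the roots with multiplicity. Then the leading principal k×k submatrix of M_p is positive definite if and only if all roots of p are real. -/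
open Polynomial Finset

lemma aux_exists (A B β : ℝ) (hβ : β ≠ 0) : ∃ u : ℝ, A*u^2 - 2*β*B*u - β^2*A ≤ 0 := by
  rcases le_or_gt 0 A with hA | hA
  · exact ⟨0, by nlinarith [sq_nonneg β]⟩
  · have hA0 : A ≠ 0 := ne_of_lt hA
    set u := (β * B + |β| * (|A| + |B|)) / A with hu
    refine ⟨u, ?_⟩
    have h1 : A * u = β * B + |β| * (|A| + |B|) := by rw [hu]; field_simp
    have h3 : (|β| * (|A| + |B|))^2 ≥ β^2*(A^2+B^2) := by
      nlinarith [sq_abs A, sq_abs B, sq_abs β, abs_nonneg A, abs_nonneg B,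
        mul_nonneg (abs_nonneg A) (abs_nonneg B), sq_nonneg β]
    by_contra hcon
    push_neg at hcon
    have h5 : A * (A*u^2 - 2*β*B*u - β^2*A) < 0 := mul_neg_of_neg_of_pos hA hcon
    have h6 : A * (A*u^2 - 2*β*B*u - β^2*A) = (A*u)^2 - 2*(β*B)*(A*u) - β^2*A^2 := by ring
    rw [h1] at h6
    nlinarith [h3, h5, h6]

lemma aux_c (W : ℂ) (y : ℂ) (hβ : y.im ≠ 0) : ∃ c : ℝ, (((y - (c:ℂ))^2) * W).re ≤ 0 := by
  obtain ⟨u, hu⟩ := aux_exists W.re W.im y.im hβ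
  refine ⟨y.re - u, ?_⟩
  simp only [pow_two, Complex.mul_re, Complex.mul_im, Complex.sub_re, Complex.sub_im,
    Complex.ofReal_re, Complex.ofReal_im]
  nlinarith [hu]

lemma key_id {n k : ℕ} (x : Fin n → ℂ) (m : ℕ → ℝ) (hm : ∀ j, ((m j : ℂ)) = ∑ i, x i ^ j)
    (v : Fin k → ℝ) :
    ((dotProduct v ((Matrix.of fun i j : Fin k => m ((i:ℕ)+(j:ℕ))).mulVec v) : ℝ) : ℂ)
      = ∑ i, (∑ a : Fin k, (v a : ℂ) * x i ^ (a:ℕ))^2 := by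
  have step1 : ((dotProduct v ((Matrix.of fun i j : Fin k => m ((i:ℕ)+(j:ℕ))).mulVec v) : ℝ) : ℂ)
      = ∑ a : Fin k, ∑ b : Fin k, ∑ i, (v a : ℂ) * (v b : ℂ) * (x i ^ (a:ℕ) * x i ^ (b:ℕ)) := by
    push_cast [Matrix.mulVec, dotProduct, Matrix.of_apply]
    refine Finset.sum_congr rfl fun a _ => ?_
    rw [Finset.mul_sum]
    refine Finset.sum_congr rfl fun b _ => ?_
    rw [hm ((a:ℕ)+(b:ℕ)), Finset.sum_mul, Finset.mul_sum]
    refine Finset.sum_congr rfl fun i _ => ?_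
    rw [pow_add]; ring
  have swap : (∑ a : Fin k, ∑ b : Fin k, ∑ i, (v a : ℂ) * (v b : ℂ) * (x i ^ (a:ℕ) * x i ^ (b:ℕ)))
      = ∑ i, ∑ a : Fin k, ∑ b : Fin k, (v a : ℂ) * (v b : ℂ) * (x i ^ (a:ℕ) * x i ^ (b:ℕ)) :=
    calc (∑ a : Fin k, ∑ b : Fin k, ∑ i, (v a : ℂ) * (v b : ℂ) * (x i ^ (a:ℕ) * x i ^ (b:ℕ)))
        = ∑ a : Fin k, ∑ i, ∑ b : Fin k, (v a : ℂ) * (v b : ℂ) * (x i ^ (a:ℕ) * x i ^ (b:ℕ)) :=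
          Finset.sum_congr rfl fun a _ => Finset.sum_comm
      _ = ∑ i, ∑ a : Fin k, ∑ b : Fin k, (v a : ℂ) * (v b : ℂ) * (x i ^ (a:ℕ) * x i ^ (b:ℕ)) :=
          Finset.sum_comm
  rw [step1, swap]
  refine Finset.sum_congr rfl fun i _ => ?_
  rw [sq, Finset.sum_mul_sum]
  refine Finset.sum_congr rfl fun a _ => Finset.sum_congr rfl fun b _ => ?_
  ring

/-- For a real polynomial of degree `n` with nonzero leading coefficient, complex roots
`x₁, …, xₙ` (with multiplicity) of which exactly `k` are distinct, and real moment matrix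
`(M_p)_{i,j} = Σ_l x_l^{i+j−2}`, the leading principal `k × k` submatrix of `M_p` is
positive definite iff all roots of `p` are real. -/
theorem stmt13 (n k : ℕ) (hk : k ≤ n) (p : Polynomial ℝ) (a : ℝ) (ha : a ≠ 0)
    (hdeg : p.natDegree = n) (hlead : p.leadingCoeff = a) (x : Fin n → ℂ)
    (hroots : p.map (algebraMap ℝ ℂ) =
      Polynomial.C ((a : ℂ)) * ∏ i, (Polynomial.X - Polynomial.C (x i)))
    (hdist : ((Finset.univ : Finset (Fin n)).image x).card = k)
    (m : ℕ → ℝ) (hm : ∀ j, ((m j : ℂ)) = ∑ i, x i ^ j) :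
    (Matrix.of fun i j : Fin k => m ((i : ℕ) + (j : ℕ))).PosDef ↔
      ∀ i, (x i).im = 0 := by
  classical
  set M := (Matrix.of fun i j : Fin k => m ((i : ℕ) + (j : ℕ))) with hM
  set s : Finset ℂ := (Finset.univ : Finset (Fin n)).image x with hs
  have hrt : ∀ i, (p.map (algebraMap ℝ ℂ)).eval (x i) = 0 := by
    intro i
    rw [hroots, Polynomial.eval_mul, Polynomial.eval_prod]
    exact mul_eq_zero_of_right _ (Finset.prod_eq_zero (Finset.mem_univ i) (by simp))
  have hroot_mem : ∀ z : ℂ, (p.map (algebraMap ℝ ℂ)).eval z = 0 → z ∈ s := by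
    intro z hz
    rw [hroots] at hz
    simp only [Polynomial.eval_mul, Polynomial.eval_C, Polynomial.eval_prod,
      Polynomial.eval_sub, Polynomial.eval_X] at hz
    rcases mul_eq_zero.mp hz with h | h
    · exact absurd h (Complex.ofReal_ne_zero.mpr ha)
    · obtain ⟨i, -, hi⟩ := Finset.prod_eq_zero_iff.mp h
      exact Finset.mem_image.mpr ⟨i, Finset.mem_univ i, ((sub_eq_zero.mp hi).symm)⟩
  have haev : ∀ w : ℂ, Polynomial.aeval w p = (p.map (algebraMap ℝ ℂ)).eval w := fun w => by
    rw [Polynomial.aeval_def, Polynomial.eval₂_eq_eval_map]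
  have hconjmem : ∀ z ∈ s, (starRingEnd ℂ) z ∈ s := by
    intro z hz
    obtain ⟨i, -, rfl⟩ := Finset.mem_image.mp hz
    apply hroot_mem
    rw [← haev, Polynomial.aeval_conj, haev, hrt i, map_zero]
  constructor
  · -- PosDef → all roots real
    intro hpd
    by_contra hcon
    push_neg at hcon
    obtain ⟨i₀, him⟩ := hcon
    set y := x i₀ with hy
    have hys : y ∈ s := Finset.mem_image.mpr ⟨i₀, Finset.mem_univ _, rfl⟩
    set yb := (starRingEnd ℂ) y with hyb
    have hybs : yb ∈ s := hconjmem y hys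
    have hne : yb ≠ y := fun h => him (Complex.conj_eq_iff_im.mp h)
    set s' := (s.erase y).erase yb with hs'
    have hybmem : yb ∈ s.erase y := Finset.mem_erase.mpr ⟨hne, hybs⟩
    have hcard' : s'.card = k - 2 := by
      rw [hs', Finset.card_erase_of_mem hybmem, Finset.card_erase_of_mem hys, hdist]
      omega
    have hk1 : 1 ≤ k := by rw [← hdist]; exact Finset.card_pos.mpr ⟨y, hys⟩
    have h2k : 2 ≤ k := by
      have h1 : 1 ≤ (s.erase y).card := Finset.card_pos.mpr ⟨yb, hybmem⟩
      have h2 := Finset.card_erase_of_mem hys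
      rw [hdist] at h2
      omega
    have hmem_s' : ∀ z, z ∈ s' ↔ (z ≠ yb ∧ z ≠ y ∧ z ∈ s) := by
      intro z
      rw [hs', Finset.mem_erase, Finset.mem_erase]
    set r : Polynomial ℂ := ∏ z ∈ s', (Polynomial.X - Polynomial.C z) with hr
    have hrmonic : r.Monic := Polynomial.monic_prod_of_monic _ _ fun z _ => Polynomial.monic_X_sub_C z
    have hrdeg : r.natDegree = k - 2 := by
      rw [hr, Polynomial.natDegree_prod _ _ (fun z _ => Polynomial.X_sub_C_ne_zero z)]
      simp [hcard']
    have hrconj : r.map (starRingEnd ℂ) = r := by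
      rw [hr, Polynomial.map_prod]
      simp only [Polynomial.map_sub, Polynomial.map_X, Polynomial.map_C]
      refine Finset.prod_bij' (fun z _ => (starRingEnd ℂ) z) (fun z _ => (starRingEnd ℂ) z)
        ?_ ?_ ?_ ?_ ?_
      · intro z hz
        rw [hmem_s'] at hz ⊢
        refine ⟨fun h => hz.2.1 ?_, fun h => hz.1 ?_, hconjmem z hz.2.2⟩
        · have := congrArg (starRingEnd ℂ) h
          simpa [hyb] using this
        · have := congrArg (starRingEnd ℂ) h
          simpa [hyb] using this
      · intro z hz
        rw [hmem_s'] at hz ⊢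
        refine ⟨fun h => hz.2.1 ?_, fun h => hz.1 ?_, hconjmem z hz.2.2⟩
        · have := congrArg (starRingEnd ℂ) h
          simpa [hyb] using this
        · have := congrArg (starRingEnd ℂ) h
          simpa [hyb] using this
      · intro z _; simp
      · intro z _; simp
      · intro z _; rfl
    have hry : r.eval y ≠ 0 := by
      rw [hr, Polynomial.eval_prod]
      apply Finset.prod_ne_zero_iff.mpr
      intro z hz
      simp only [Polynomial.eval_sub, Polynomial.eval_X, Polynomial.eval_C]
      rw [sub_ne_zero]
      intro h
      rw [hmem_s'] at hz
      exact hz.2.1 h.symm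
    obtain ⟨c, hc⟩ := aux_c ((r.eval y)^2) y him
    set q := (Polynomial.X - Polynomial.C ((c:ℝ):ℂ)) * r with hq
    have hqmonic : q.Monic := (Polynomial.monic_X_sub_C _).mul hrmonic
    have hqdeg : q.natDegree = k - 1 := by
      rw [hq, Polynomial.natDegree_mul (Polynomial.X_sub_C_ne_zero _) hrmonic.ne_zero,
        Polynomial.natDegree_X_sub_C, hrdeg]
      omega
    have hqconj : q.map (starRingEnd ℂ) = q := by
      rw [hq, Polynomial.map_mul, Polynomial.map_sub, Polynomial.map_X, Polynomial.map_C, hrconj]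
      simp [Complex.conj_ofReal]
    have hconj_eval : ∀ z : ℂ, (starRingEnd ℂ) (q.eval z) = q.eval ((starRingEnd ℂ) z) := by
      intro z
      conv_rhs => rw [← hqconj]
      rw [Polynomial.eval_map,
        show q.eval z = Polynomial.eval₂ (RingHom.id ℂ) z q from rfl,
        Polynomial.hom_eval₂, RingHom.comp_id]
    set v : Fin k → ℝ := fun a => (q.coeff (a:ℕ)).re with hv
    have hvc : ∀ a : Fin k, ((v a : ℝ) : ℂ) = q.coeff (a:ℕ) := by
      intro a
      have him0 : (q.coeff (a:ℕ)).im = 0 := by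
        have h := congrArg (fun p => Polynomial.coeff p (a:ℕ)) hqconj
        simp only [Polynomial.coeff_map] at h
        exact Complex.conj_eq_iff_im.mp h
      rw [hv]
      exact (Complex.ext (by simp) (by simp [him0])).symm
    have hvne : v ≠ 0 := by
      intro h0
      have hk2 : k - 1 < k := by omega
      have hz : v ⟨k-1, hk2⟩ = 0 := by rw [h0]; rfl
      have hlc : q.coeff (k-1) = 1 := by
        have h := hqmonic
        rw [Polynomial.Monic, Polynomial.leadingCoeff, hqdeg] at h
        exact h
      rw [hv] at hz
      simp only [hlc] at hz
      simp at hz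
    have heval : ∀ z : ℂ, (∑ a : Fin k, (v a : ℂ) * z ^ (a:ℕ)) = q.eval z := by
      intro z
      rw [Polynomial.eval_eq_sum_range' (show q.natDegree < k by omega),
        ← Fin.sum_univ_eq_sum_range (fun i => q.coeff i * z ^ i) k]
      exact Finset.sum_congr rfl fun a _ => by rw [hvc]
    have hterm_y : ((q.eval y)^2).re ≤ 0 := by
      have hqy : q.eval y = (y - ((c:ℝ):ℂ)) * r.eval y := by rw [hq]; simp
      rw [hqy, mul_pow]
      exact hc
    have hterm : ∀ i, ((q.eval (x i))^2).re ≤ 0 := by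
      intro i
      rcases eq_or_ne (x i) y with h | h
      · rw [h]; exact hterm_y
      rcases eq_or_ne (x i) yb with h' | h'
      · have hqyb : q.eval (x i) = (starRingEnd ℂ) (q.eval y) := by
          rw [h', hyb, ← hconj_eval]
        rw [hqyb, ← map_pow, Complex.conj_re]
        exact hterm_y
      · have hzs' : x i ∈ s' := by
          rw [hmem_s']
          exact ⟨h', h, Finset.mem_image.mpr ⟨i, Finset.mem_univ i, rfl⟩⟩
        have hr0 : r.eval (x i) = 0 := by
          rw [hr, Polynomial.eval_prod]
          exact Finset.prod_eq_zero hzs' (by simp)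
        rw [hq]
        simp [hr0]
    have hkey := key_id x m hm v
    have hsum : dotProduct v (M.mulVec v) ≤ 0 := by
      have h1 : dotProduct v (M.mulVec v)
          = (((dotProduct v (M.mulVec v) : ℝ) : ℂ)).re := (Complex.ofReal_re _).symm
      rw [h1, hM, hkey, Complex.re_sum]
      refine Finset.sum_nonpos fun i _ => ?_
      rw [heval]
      exact hterm i
    have hpos := hpd.dotProduct_mulVec_pos hvne
    have hstar : star v = v := funext fun a => star_trivial (v a)
    rw [hstar] at hpos
    exact absurd hsum (not_le.mpr hpos)
  · -- all roots real → PosDef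
    intro hreal
    refine Matrix.PosDef.of_dotProduct_mulVec_pos ?_ ?_
    · ext i j
      simp only [Matrix.conjTranspose_apply, hM, Matrix.of_apply, star_trivial]
      rw [Nat.add_comm]
    · intro v hv
      have hstar : star v = v := funext fun a => star_trivial (v a)
      rw [hstar]
      have hkey := key_id x m hm v
      have hxr : ∀ i, x i = (((x i).re : ℝ) : ℂ) := fun i =>
        Complex.ext (by simp) (by simp [hreal i])
      set g : Fin n → ℝ := fun i => ∑ a : Fin k, v a * (x i).re ^ (a:ℕ) with hg
      have hgc : ∀ i, (∑ a : Fin k, (v a : ℂ) * x i ^ (a:ℕ)) = ((g i : ℝ) : ℂ) := by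
        intro i
        rw [hg]
        push_cast
        refine Finset.sum_congr rfl fun b _ => ?_
        conv_lhs => rw [hxr i]
      have hval : dotProduct v (M.mulVec v) = ∑ i, (g i)^2 := by
        have h2 : ((dotProduct v (M.mulVec v) : ℝ) : ℂ) = ((∑ i, (g i)^2 : ℝ) : ℂ) := by
          rw [hM, hkey]
          push_cast
          exact Finset.sum_congr rfl fun i _ => by rw [hgc i]
        exact_mod_cast h2
      rw [hval]
      rcases Classical.em (∀ i, g i = 0) with hz | hnz
      · exfalso
        obtain ⟨a₀, ha₀⟩ := Function.ne_iff.mp hv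
        set Q : Polynomial ℂ := ∑ b : Fin k, Polynomial.C ((v b : ℝ) : ℂ) * Polynomial.X ^ (b:ℕ)
          with hQ
        have hQeval : ∀ z : ℂ, Q.eval z = ∑ b : Fin k, (v b : ℂ) * z ^ (b:ℕ) := by
          intro z
          rw [hQ, Polynomial.eval_finset_sum]
          simp
        have hQz : ∀ z ∈ s, Q.eval z = 0 := by
          intro z hzs
          obtain ⟨i, -, rfl⟩ := Finset.mem_image.mp hzs
          rw [hQeval, hgc i, hz i]
          simp
        have hQdeg : Q.natDegree < k := by
          have hk1 : 1 ≤ k := Nat.one_le_iff_ne_zero.mpr (by rintro rfl; exact a₀.elim0)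
          refine Nat.lt_of_le_of_lt (Polynomial.natDegree_sum_le_of_forall_le _ _ ?_)
            (show k - 1 < k by omega)
          intro b _
          refine le_trans (Polynomial.natDegree_C_mul_le _ _) ?_
          rw [Polynomial.natDegree_X_pow]
          omega
        have hQ0 : Q = 0 := by
          apply Polynomial.eq_zero_of_natDegree_lt_card_of_eval_eq_zero' Q s hQz
          rw [hdist]
          exact hQdeg
        have hcoeff : Q.coeff (a₀:ℕ) = ((v a₀ : ℝ) : ℂ) := by
          rw [hQ, Polynomial.finset_sum_coeff]
          rw [Finset.sum_eq_single a₀]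
          · simp
          · intro b _ hb
            simp only [Polynomial.coeff_C_mul, Polynomial.coeff_X_pow]
            rw [if_neg (fun h => hb (Fin.ext h.symm))]
            ring
          · intro h
            exact absurd (Finset.mem_univ a₀) h
        rw [hQ0] at hcoeff
        simp only [Polynomial.coeff_zero] at hcoeff
        exact ha₀ (by exact_mod_cast hcoeff.symm)
      · push_neg at hnz
        obtain ⟨i₁, hi₁⟩ := hnz
        exact Finset.sum_pos' (fun i _ => sq_nonneg _)
          ⟨i₁, Finset.mem_univ _, by positivity⟩
end
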